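/- arXiv:1911.10765 — 4 statements merged into one kernel-verified Lean document; each statement's English description precedes it below -/
import Mathlib

section
/- Let M₁, M₂ be matroids on V, S ∈ I₁ ∩ I₂, and suppose the exchange graph G(S) has shortest s–t distance 2(ℓ+1). If Π and Π̃ are two maximal augmenting sets in G(S) with widths w and w̃ respectively, then w̃ ≤ (2ℓ+4)·w. -/
open Classical

noncomputable section

structure FinMatroid (α : Type*) where
  Indep : Finset α → Prop
  empty_indep : Indep ∅
  subset_indep : ∀ ⦃A B : Finset α⦄, Indep A → B ⊆ A → Indep B
  exchange : ∀ ⦃A B : Finset α⦄, Indep A → Indep B → A.card < B.card →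
    ∃ b ∈ B \ A, Indep (insert b A)

variable {α : Type*} [DecidableEq α]

/-- The rank of a set `T`: the maximum cardinality of an independent subset of `T`. -/
def FinMatroid.rank (M : FinMatroid α) (T : Finset α) : ℕ :=
  (T.powerset.filter fun A => M.Indep A).sup Finset.card

/-- Vertices of the exchange graph: a source `src`, a sink `snk`, and the ground elements. -/
inductive EGV (α : Type*) where
  | src : EGV α
  | snk : EGV α
  | el : α → EGV α

/-- Arcs of the exchange graph `G(S)` for `S ∈ I₁ ∩ I₂`. -/
def egAdj (M₁ M₂ : FinMatroid α) (S : Finset α) : EGV α → EGV α → Prop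
  | EGV.src, EGV.el b => b ∉ S ∧ M₁.Indep (insert b S)
  | EGV.el b, EGV.snk => b ∉ S ∧ M₂.Indep (insert b S)
  | EGV.el x, EGV.el y =>
      (x ∈ S ∧ y ∉ S ∧ M₁.Indep (insert y (S.erase x))) ∨
      (x ∉ S ∧ y ∈ S ∧ M₂.Indep (insert x (S.erase y)))
  | _, _ => False

/-- Directed shortest-path distance in the exchange graph (number of arcs), `⊤` if unreachable. -/
def egDist (M₁ M₂ : FinMatroid α) (S : Finset α) (u v : EGV α) : ℕ∞ :=
  sInf {n : ℕ∞ | ∃ l : List (EGV α),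
    List.Chain' (egAdj M₁ M₂ S) (u :: (l ++ [v])) ∧ n = (l.length : ℕ∞) + 1}

/-- An augmenting set `(B 1, A 1, B 2, …, A ℓ, B (ℓ+1))` of width `w` in the exchange graph
`G(S)`: pairwise disjoint sets with `A k ⊆ D_{2k}`, `B k ⊆ D_{2k-1}` (distance layers from the
source), all of cardinality `w`, with `S + B₁ ∈ I₁`, `S + B_{ℓ+1} ∈ I₂`,
`S − A_k + B_{k+1} ∈ I₁` and `S − A_k + B_k ∈ I₂`. -/
def IsAugSet (M₁ M₂ : FinMatroid α) (S : Finset α) (ℓ w : ℕ)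
    (A B : ℕ → Finset α) : Prop :=
  (∀ k ∈ Finset.Icc 1 ℓ, ∀ a ∈ A k,
      egDist M₁ M₂ S EGV.src (EGV.el a) = ((2 * k : ℕ) : ℕ∞)) ∧
  (∀ k ∈ Finset.Icc 1 (ℓ + 1), ∀ b ∈ B k,
      egDist M₁ M₂ S EGV.src (EGV.el b) = ((2 * k - 1 : ℕ) : ℕ∞)) ∧
  (∀ i ∈ Finset.Icc 1 ℓ, ∀ j ∈ Finset.Icc 1 ℓ, i ≠ j → Disjoint (A i) (A j)) ∧
  (∀ i ∈ Finset.Icc 1 (ℓ + 1), ∀ j ∈ Finset.Icc 1 (ℓ + 1), i ≠ j → Disjoint (B i) (B j)) ∧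
  (∀ i ∈ Finset.Icc 1 ℓ, ∀ j ∈ Finset.Icc 1 (ℓ + 1), Disjoint (A i) (B j)) ∧
  (∀ k ∈ Finset.Icc 1 ℓ, (A k).card = w) ∧
  (∀ k ∈ Finset.Icc 1 (ℓ + 1), (B k).card = w) ∧
  M₁.Indep (S ∪ B 1) ∧
  M₂.Indep (S ∪ B (ℓ + 1)) ∧
  (∀ k ∈ Finset.Icc 1 ℓ, M₁.Indep ((S \ A k) ∪ B (k + 1))) ∧
  (∀ k ∈ Finset.Icc 1 ℓ, M₂.Indep ((S \ A k) ∪ B k))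

section AuxLemmas

lemma fm_exchange (M : FinMatroid α) {X Y : Finset α} (hX : M.Indep X) (hY : M.Indep Y)
    (h : X.card < Y.card) : ∃ b ∈ Y \ X, M.Indep (insert b X) := by
  obtain ⟨b, hb, hbi⟩ := M.exchange hX hY h
  simp only [Finset.mem_sdiff] at hb
  refine ⟨b, Finset.mem_sdiff.2 hb, ?_⟩
  have e : (@insert α (Finset α) (@Finset.instInsert α (fun a b => propDecidable (a = b))) b X)
      = insert b X := by ext x; simp
  rw [← e]
  exact hbi

lemma fm_grow (M : FinMatroid α) : ∀ (n : ℕ) (X Y : Finset α), M.Indep X → M.Indep Y →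
    X.card + n = Y.card → ∃ W, X ⊆ W ∧ W ⊆ X ∪ Y ∧ W.card = Y.card ∧ M.Indep W := by
  intro n
  induction n with
  | zero =>
    intro X Y hX _ hc
    exact ⟨X, subset_rfl, Finset.subset_union_left, by omega, hX⟩
  | succ n ih =>
    intro X Y hX hY hc
    obtain ⟨b, hb, hbi⟩ := fm_exchange M hX hY (by omega)
    simp only [Finset.mem_sdiff] at hb
    obtain ⟨W, h1, h2, h3, h4⟩ := ih (insert b X) Y hbi hY
      (by rw [Finset.card_insert_of_notMem hb.2]; omega)
    refine ⟨W, (Finset.subset_insert _ _).trans h1, h2.trans ?_, h3, h4⟩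
    intro x hx
    rcases Finset.mem_union.1 hx with hx | hx
    · rcases Finset.mem_insert.1 hx with rfl | hx
      · exact Finset.mem_union_right _ hb.1
      · exact Finset.mem_union_left _ hx
    · exact Finset.mem_union_right _ hx

lemma fm_count (M : FinMatroid α) {X W T : Finset α} (hX : M.Indep X) (hW : M.Indep W)
    (hWsub : W ⊆ X ∪ T) (hT : ∀ b ∈ T, b ∉ X → ¬ M.Indep (insert b X)) :
    W.card ≤ X.card := by
  by_contra hlt
  obtain ⟨b, hb, hbi⟩ := fm_exchange M hX hW (by omega)
  simp only [Finset.mem_sdiff] at hb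
  rcases Finset.mem_union.1 (hWsub hb.1) with h | h
  · exact hb.2 h
  · exact hT b h hb.2 hbi

lemma fm_removal (M : FinMatroid α) {X Z : Finset α} {b : α} (hX : M.Indep X) (hb : b ∉ X)
    (hdep : ¬ M.Indep (insert b X)) (hZ : Z ⊆ X)
    (hall : ∀ a ∈ Z, ¬ M.Indep ((insert b X).erase a)) :
    ¬ M.Indep (insert b (X \ Z)) := by
  intro hind
  rcases Z.eq_empty_or_nonempty with rfl | hZne
  · rw [Finset.sdiff_empty] at hind; exact hdep hind
  have hbz : b ∉ X \ Z := fun h => hb (Finset.mem_sdiff.1 h).1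
  have hcard : (insert b (X \ Z)).card + (Z.card - 1) = X.card := by
    rw [Finset.card_insert_of_notMem hbz, Finset.card_sdiff_of_subset hZ]
    have := Finset.card_le_card hZ
    have := Finset.card_pos.2 hZne
    omega
  obtain ⟨W, hW1, hW2, hW3, hW4⟩ := fm_grow M _ _ _ hind hX hcard
  have hWsub : W ⊆ insert b X := by
    refine hW2.trans ?_
    intro x hx
    rcases Finset.mem_union.1 hx with hx | hx
    · rcases Finset.mem_insert.1 hx with rfl | hx
      · exact Finset.mem_insert_self _ _
      · exact Finset.mem_insert_of_mem (Finset.mem_sdiff.1 hx).1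
    · exact Finset.mem_insert_of_mem hx
  have hbX : (insert b X).card = X.card + 1 := Finset.card_insert_of_notMem hb
  have hex : ∃ a ∈ insert b X, a ∉ W := by
    by_contra hcon
    push_neg at hcon
    have := Finset.card_le_card hcon
    omega
  obtain ⟨a, ha, haW⟩ := hex
  have haZ : a ∈ Z := by
    rcases Finset.mem_insert.1 ha with rfl | haX
    · exact absurd (hW1 (Finset.mem_insert_self _ _)) haW
    · by_contra haZ
      exact haW (hW1 (Finset.mem_insert_of_mem (Finset.mem_sdiff.2 ⟨haX, haZ⟩)))
  have hWe : W = (insert b X).erase a := by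
    apply Finset.eq_of_subset_of_card_le
    · intro x hx
      exact Finset.mem_erase.2 ⟨fun h => haW (h ▸ hx), hWsub hx⟩
    · rw [Finset.card_erase_of_mem ha]; omega
  exact hall a haZ (hWe ▸ hW4)

variable (M₁ M₂ : FinMatroid α) (S : Finset α)

lemma egDist_le {u v : EGV α} {l : List (EGV α)}
    (h : List.Chain' (egAdj M₁ M₂ S) (u :: (l ++ [v]))) :
    egDist M₁ M₂ S u v ≤ (l.length : ℕ∞) + 1 :=
  sInf_le ⟨l, h, rfl⟩

lemma egDist_attained {u v : EGV α} {n : ℕ} (h : egDist M₁ M₂ S u v = (n : ℕ∞)) :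
    ∃ l : List (EGV α), List.Chain' (egAdj M₁ M₂ S) (u :: (l ++ [v])) ∧ l.length + 1 = n := by
  classical
  set 𝒮 := {n : ℕ∞ | ∃ l : List (EGV α),
    List.Chain' (egAdj M₁ M₂ S) (u :: (l ++ [v])) ∧ n = (l.length : ℕ∞) + 1} with h𝒮
  have hne : 𝒮.Nonempty := by
    by_contra hemp
    rw [Set.not_nonempty_iff_eq_empty] at hemp
    have : egDist M₁ M₂ S u v = ⊤ := by
      rw [egDist, ← h𝒮, hemp, sInf_empty]
    rw [h] at this
    exact (ENat.coe_ne_top n) this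
  set N := {m : ℕ | ∃ l : List (EGV α),
    List.Chain' (egAdj M₁ M₂ S) (u :: (l ++ [v])) ∧ l.length = m} with hN
  have hNne : N.Nonempty := by
    obtain ⟨x, l, hl, rfl⟩ := hne
    exact ⟨l.length, l, hl, rfl⟩
  obtain ⟨l₀, hl₀, hlen₀⟩ := Nat.sInf_mem hNne
  have hdist : egDist M₁ M₂ S u v = ((sInf N : ℕ) : ℕ∞) + 1 := by
    apply le_antisymm
    · exact sInf_le ⟨l₀, hl₀, by rw [hlen₀]⟩
    · apply le_sInf
      rintro m ⟨l, hl, rfl⟩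
      have : sInf N ≤ l.length := Nat.sInf_le ⟨l, hl, rfl⟩
      exact add_le_add (by exact_mod_cast this) (le_refl 1)
  rw [h] at hdist
  have hn : n = sInf N + 1 := by exact_mod_cast hdist
  exact ⟨l₀, hl₀, by omega⟩

lemma egDist_edge {u y v : EGV α} (hadj : egAdj M₁ M₂ S y v) :
    egDist M₁ M₂ S u v ≤ egDist M₁ M₂ S u y + 1 := by
  by_cases htop : egDist M₁ M₂ S u y = ⊤
  · rw [htop]; simp
  have hex : ∃ m : ℕ, egDist M₁ M₂ S u y = (m : ℕ∞) := by
    lift egDist M₁ M₂ S u y to ℕ using htop with m hm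
    exact ⟨m, rfl⟩
  obtain ⟨d, hd'⟩ := hex
  have hd : (d : ℕ∞) = egDist M₁ M₂ S u y := hd'.symm
  obtain ⟨l, hl, hlen⟩ := egDist_attained M₁ M₂ S hd'
  have hchain : List.Chain' (egAdj M₁ M₂ S) (u :: ((l ++ [y]) ++ [v])) := by
    have h1 : u :: ((l ++ [y]) ++ [v]) = (u :: (l ++ [y])) ++ [v] := by simp
    rw [h1]
    apply List.IsChain.append hl (List.isChain_singleton v)
    intro a ha b hb
    simp only [List.head?_cons, Option.mem_def, Option.some.injEq] at hb
    have : (u :: (l ++ [y])).getLast? = some y := by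
      rw [show u :: (l ++ [y]) = (u :: l) ++ [y] by simp, List.getLast?_concat]
    rw [this, Option.mem_def, Option.some.injEq] at ha
    subst ha; subst hb
    exact hadj
  have := egDist_le M₁ M₂ S hchain
  rw [← hd]
  refine this.trans ?_
  simp only [List.length_append, List.length_singleton]
  subst hlen
  push_cast
  ring_nf
  exact le_refl _

lemma egDist_parity : ∀ (n : ℕ) (x : α),
    egDist M₁ M₂ S EGV.src (EGV.el x) = (n : ℕ∞) → (x ∈ S ↔ Even n) := by
  intro n
  induction n using Nat.strong_induction_on with
  | _ n ih =>
    intro x hx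
    obtain ⟨l, hl, hlen⟩ := egDist_attained M₁ M₂ S hx
    rcases l.eq_nil_or_concat with rfl | ⟨l'', u, rfl⟩
    · -- direct edge from src
      simp only [List.nil_append] at hl
      have hadj : egAdj M₁ M₂ S EGV.src (EGV.el x) := List.isChain_pair.1 hl
      have hxS : x ∉ S := hadj.1
      simp only [List.length_nil] at hlen
      constructor
      · intro h; exact absurd h hxS
      · intro h; rw [← hlen] at h; simp [Nat.even_iff] at h
    · -- path of length ≥ 2
      rw [List.concat_eq_append] at hl hlen
      have hsplit : EGV.src :: ((l'' ++ [u]) ++ [EGV.el x])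
          = (EGV.src :: (l'' ++ [u])) ++ [EGV.el x] := by simp
      rw [hsplit] at hl
      replace hl := List.isChain_append.1 hl
      obtain ⟨hpre, -, hlast⟩ := hl
      have hadj : egAdj M₁ M₂ S u (EGV.el x) := by
        apply hlast u _ (EGV.el x)
        · simp
        · rw [show EGV.src :: (l'' ++ [u]) = (EGV.src :: l'') ++ [u] by simp,
            List.getLast?_concat]; rfl
      have hlen2 : l''.length + 2 = n := by
        simp only [List.length_append, List.length_singleton] at hlen; omega
      match u with
      | EGV.src =>
          -- there is a direct edge src → el x, so dist ≤ 1, contradiction with n ≥ 2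
          exfalso
          have h1 : List.Chain' (egAdj M₁ M₂ S) (EGV.src :: (([] : List (EGV α)) ++ [EGV.el x])) := by
            simp only [List.nil_append]
            exact List.isChain_pair.2 hadj
          have hle := egDist_le M₁ M₂ S h1
          rw [hx] at hle
          simp only [List.length_nil, Nat.cast_zero, zero_add] at hle
          have : n ≤ 1 := by exact_mod_cast hle
          omega
      | EGV.snk => exact absurd hadj (by simp [egAdj])
      | EGV.el y =>
          have hprele := egDist_le M₁ M₂ S hpre
          have hyub : egDist M₁ M₂ S EGV.src (EGV.el y) ≤ ((l''.length : ℕ∞) + 1) := hprele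
          have hylb := egDist_edge M₁ M₂ S (u := EGV.src) hadj
          rw [hx] at hylb
          have hytop : egDist M₁ M₂ S EGV.src (EGV.el y) ≠ ⊤ := by
            intro h; rw [h] at hyub
            have h2 : ((l''.length : ℕ∞) + 1) = ((l''.length + 1 : ℕ) : ℕ∞) := by push_cast; ring
            rw [h2, top_le_iff] at hyub
            exact (ENat.coe_ne_top _) hyub
          have hex : ∃ m : ℕ, egDist M₁ M₂ S EGV.src (EGV.el y) = (m : ℕ∞) := by
            lift egDist M₁ M₂ S EGV.src (EGV.el y) to ℕ using hytop with m hm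
            exact ⟨m, rfl⟩
          obtain ⟨m, hm'⟩ := hex
          have hm : (m : ℕ∞) = egDist M₁ M₂ S EGV.src (EGV.el y) := hm'.symm
          rw [← hm] at hyub hylb
          have hub : m ≤ l''.length + 1 := by exact_mod_cast hyub
          have hlb : n ≤ m + 1 := by exact_mod_cast hylb
          have hmn : m = n - 1 := by omega
          have hIH := ih m (by omega) y hm'
          simp only [egAdj] at hadj
          rcases hadj with ⟨hyS, hxS, -⟩ | ⟨hyS, hxS, -⟩
          · -- y ∈ S, x ∉ S : n odd
            have : Even m := hIH.1 hyS
            rw [Nat.even_iff] at this ⊢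
            constructor
            · intro h; exact absurd h hxS
            · intro h; omega
          · -- y ∉ S, x ∈ S : n even
            have : ¬ Even m := fun h => hyS (hIH.2 h)
            rw [Nat.even_iff] at this ⊢
            simp only [Nat.even_iff] at *
            constructor
            · intro _; omega
            · intro _; exact hxS

/-- Layer sets that can be reached by a partial augmenting chain. -/
def chainY (A B A' B' : ℕ → Finset α) : ℕ → Finset α
  | 0 => ∅
  | 1 => (A' 1 \ A 1).filter (fun a => ∃ b ∈ B' 1 \ B 1,
      M₁.Indep (insert b (S ∪ B 1)) ∧
      M₂.Indep ((insert b ((S \ A 1) ∪ B 1)).erase a))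
  | (k+2) => (A' (k+2) \ A (k+2)).filter (fun a => ∃ b ∈ B' (k+2) \ B (k+2),
      (∃ a' ∈ chainY A B A' B' (k+1),
        M₁.Indep ((insert b ((S \ A (k+1)) ∪ B (k+2))).erase a')) ∧
      M₂.Indep ((insert b ((S \ A (k+2)) ∪ B (k+2))).erase a))

end AuxLemmas

/-- Any two maximal augmenting sets in `G(S)` (shortest `s`–`t` distance `2(ℓ+1)`), of widths
`w` and `w'`, satisfy `w' ≤ (2ℓ + 4)·w`. Maximality of `(A, B)` is expressed as: any
augmenting set containing it coordinatewise equals it. -/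
theorem maximal_augset_width_ratio (M₁ M₂ : FinMatroid α) (S : Finset α) (ℓ w w' : ℕ)
    (A B A' B' : ℕ → Finset α)
    (hS₁ : M₁.Indep S) (hS₂ : M₂.Indep S)
    (hdist : egDist M₁ M₂ S EGV.src EGV.snk = ((2 * (ℓ + 1) : ℕ) : ℕ∞))
    (h1 : IsAugSet M₁ M₂ S ℓ w A B)
    (h1max : ∀ (w₀ : ℕ) (A₀ B₀ : ℕ → Finset α), IsAugSet M₁ M₂ S ℓ w₀ A₀ B₀ →
      (∀ k ∈ Finset.Icc 1 ℓ, A k ⊆ A₀ k) → (∀ k ∈ Finset.Icc 1 (ℓ + 1), B k ⊆ B₀ k) →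
      (∀ k ∈ Finset.Icc 1 ℓ, A₀ k = A k) ∧ (∀ k ∈ Finset.Icc 1 (ℓ + 1), B₀ k = B k))
    (h2 : IsAugSet M₁ M₂ S ℓ w' A' B')
    (h2max : ∀ (w₀ : ℕ) (A₀ B₀ : ℕ → Finset α), IsAugSet M₁ M₂ S ℓ w₀ A₀ B₀ →
      (∀ k ∈ Finset.Icc 1 ℓ, A' k ⊆ A₀ k) → (∀ k ∈ Finset.Icc 1 (ℓ + 1), B' k ⊆ B₀ k) →
      (∀ k ∈ Finset.Icc 1 ℓ, A₀ k = A' k) ∧ (∀ k ∈ Finset.Icc 1 (ℓ + 1), B₀ k = B' k)) :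
    w' ≤ (2 * ℓ + 4) * w := by
  classical
  by_contra hcon
  push_neg at hcon
  obtain ⟨h1dA, h1dB, h1AA, h1BB, h1AB, h1cA, h1cB, h1i1, h1i2, h1x1, h1x2⟩ := h1
  obtain ⟨h2dA, h2dB, h2AA, h2BB, h2AB, h2cA, h2cB, h2i1, h2i2, h2x1, h2x2⟩ := h2
  have hw : w < w' := by
    have : w ≤ (2 * ℓ + 4) * w := Nat.le_mul_of_pos_left w (by omega)
    omega
  -- membership facts from distances
  have hmem : ∀ (x : α) (n : ℕ), egDist M₁ M₂ S EGV.src (EGV.el x) = (n : ℕ∞) →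
      (x ∈ S ↔ Even n) := fun x n h => egDist_parity M₁ M₂ S n x h
  have hAS : ∀ k, 1 ≤ k → k ≤ ℓ → ∀ a ∈ A k, a ∈ S := by
    intro k hk1 hk2 a ha
    exact (hmem a (2*k) (h1dA k (Finset.mem_Icc.2 ⟨hk1, hk2⟩) a ha)).2 ⟨k, by ring⟩
  have hA'S : ∀ k, 1 ≤ k → k ≤ ℓ → ∀ a ∈ A' k, a ∈ S := by
    intro k hk1 hk2 a ha
    exact (hmem a (2*k) (h2dA k (Finset.mem_Icc.2 ⟨hk1, hk2⟩) a ha)).2 ⟨k, by ring⟩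
  have hBS : ∀ k, 1 ≤ k → k ≤ ℓ+1 → ∀ b ∈ B k, b ∉ S := by
    intro k hk1 hk2 b hb hbS
    have := (hmem b (2*k-1) (h1dB k (Finset.mem_Icc.2 ⟨hk1, hk2⟩) b hb)).1 hbS
    rw [Nat.even_iff] at this; omega
  have hB'S : ∀ k, 1 ≤ k → k ≤ ℓ+1 → ∀ b ∈ B' k, b ∉ S := by
    intro k hk1 hk2 b hb hbS
    have := (hmem b (2*k-1) (h2dB k (Finset.mem_Icc.2 ⟨hk1, hk2⟩) b hb)).1 hbS
    rw [Nat.even_iff] at this; omega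
  -- distance-based disjointness
  have hdisj : ∀ (P Q : Finset α) (p q : ℕ),
      (∀ x ∈ P, egDist M₁ M₂ S EGV.src (EGV.el x) = (p : ℕ∞)) →
      (∀ x ∈ Q, egDist M₁ M₂ S EGV.src (EGV.el x) = (q : ℕ∞)) → p ≠ q → Disjoint P Q := by
    intro P Q p q hP hQ hpq
    rw [Finset.disjoint_left]
    intro x hxP hxQ
    have := (hP x hxP).symm.trans (hQ x hxQ)
    exact hpq (by exact_mod_cast this)
  -- generic set equality tool
  have hseteq : ∀ (Ak Bk : Finset α) (a b : α), a ∉ Bk → a ≠ b →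
      (S \ insert a Ak) ∪ insert b Bk = (insert b ((S \ Ak) ∪ Bk)).erase a := by
    intro Ak Bk a b ha hab
    ext x
    simp only [Finset.mem_erase, Finset.mem_union, Finset.mem_sdiff, Finset.mem_insert]
    constructor
    · rintro (⟨hxS, hx⟩ | (rfl | hx))
      · exact ⟨fun h => hx (Or.inl h), Or.inr (Or.inl ⟨hxS, fun h => hx (Or.inr h)⟩)⟩
      · exact ⟨fun h => hab h.symm, Or.inl rfl⟩
      · exact ⟨fun h => ha (h ▸ hx), Or.inr (Or.inr hx)⟩
    · rintro ⟨hxa, (rfl | (⟨hxS, hxA⟩ | hx))⟩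
      · exact Or.inr (Or.inl rfl)
      · exact Or.inl ⟨hxS, by rintro (rfl | h); exact hxa rfl; exact hxA h⟩
      · exact Or.inr (Or.inr hx)
  rcases Nat.eq_zero_or_pos ℓ with rfl | hl1
  · -- case ℓ = 0
    have hcon' : 4 * w < w' := by omega
    have hB1S : Disjoint S (B 1) := by
      rw [Finset.disjoint_right]; intro x hx; exact hBS 1 le_rfl le_rfl x hx
    have hB'1S : Disjoint S (B' 1) := by
      rw [Finset.disjoint_right]; intro x hx; exact hB'S 1 le_rfl le_rfl x hx
    have hcard1 : (S ∪ B 1).card = S.card + w := by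
      rw [Finset.card_union_of_disjoint hB1S, h1cB 1 (by simp)]
    have hcard2 : (S ∪ B' 1).card = S.card + w' := by
      rw [Finset.card_union_of_disjoint hB'1S, h2cB 1 (by simp)]
    obtain ⟨W, hW1, hW2, hW3, hW4⟩ := fm_grow M₂ (w' - w) (S ∪ B 1) (S ∪ B' 1)
      h1i2 h2i2 (by omega)
    set K := W \ (S ∪ B 1) with hK
    have hKsub : K ⊆ B' 1 \ B 1 := by
      intro x hx
      rw [hK, Finset.mem_sdiff] at hx
      obtain ⟨hxW, hxX⟩ := hx
      have hx2 := hW2 hxW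
      simp only [Finset.mem_union] at hx2 hxX
      rw [Finset.mem_sdiff]
      push_neg at hxX
      tauto
    have hKcard : K.card = w' - w := by
      rw [hK, Finset.card_sdiff_of_subset hW1]; omega
    have hKind : ∀ b ∈ K, M₂.Indep (insert b (S ∪ B 1)) := by
      intro b hb
      apply M₂.subset_indep hW4
      intro x hx
      rcases Finset.mem_insert.1 hx with rfl | hx
      · exact (Finset.mem_sdiff.1 (hK ▸ hb)).1
      · exact hW1 hx
    set bad1 := K.filter (fun b => ¬ M₁.Indep (insert b (S ∪ B 1))) with hbad1
    have hbad1c : bad1.card ≤ w := by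
      have hWind : M₁.Indep (S ∪ bad1) := by
        apply M₁.subset_indep h2i1
        intro x hx
        rcases Finset.mem_union.1 hx with h | h
        · exact Finset.mem_union_left _ h
        · exact Finset.mem_union_right _
            (Finset.mem_sdiff.1 (hKsub (Finset.mem_filter.1 h).1)).1
      have := fm_count M₁ (T := bad1) h1i1 hWind
        (by intro x hx; rcases Finset.mem_union.1 hx with h | h
            · exact Finset.mem_union_left _ (Finset.mem_union_left _ h)
            · exact Finset.mem_union_right _ h)
        (by intro b hb _; exact (Finset.mem_filter.1 hb).2)
      have hcb : (S ∪ bad1).card = S.card + bad1.card := by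
        rw [Finset.card_union_of_disjoint]
        rw [Finset.disjoint_right]
        intro x hx
        exact hB'S 1 le_rfl le_rfl _ (Finset.mem_sdiff.1 (hKsub (Finset.mem_filter.1 hx).1)).1
      omega
    have hKbne : (K \ bad1).Nonempty := by
      rw [← Finset.card_pos]
      have h1 := Finset.card_le_card_sdiff_add_card (s := K) (t := bad1)
      omega
    obtain ⟨b, hb⟩ := hKbne
    rw [Finset.mem_sdiff] at hb
    have hbK := hb.1
    have hbB' : b ∈ B' 1 \ B 1 := hKsub hbK
    have hb1 : M₁.Indep (insert b (S ∪ B 1)) := by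
      by_contra hcon2
      exact hb.2 (Finset.mem_filter.2 ⟨hbK, hcon2⟩)
    have hb2 : M₂.Indep (insert b (S ∪ B 1)) := hKind b hbK
    -- build the bigger augmenting set
    have hAug : IsAugSet M₁ M₂ S 0 (w+1) A (fun k => insert b (B k)) := by
      refine ⟨?_, ?_, ?_, ?_, ?_, ?_, ?_, ?_, ?_, ?_, ?_⟩
      · intro k hk; simp at hk
      · intro k hk x hx
        simp only [Finset.mem_Icc] at hk
        have hk1 : k = 1 := by omega
        subst hk1
        rcases Finset.mem_insert.1 hx with rfl | hx
        · exact h2dB 1 (by simp) _ (Finset.mem_sdiff.1 hbB').1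
        · exact h1dB 1 (by simp) _ hx
      · intro i hi; simp at hi
      · intro i hi j hj hij
        simp only [Finset.mem_Icc] at hi hj
        omega
      · intro i hi; simp at hi
      · intro k hk; simp at hk
      · intro k hk
        simp only [Finset.mem_Icc] at hk
        have hk1 : k = 1 := by omega
        subst hk1
        rw [Finset.card_insert_of_notMem (Finset.mem_sdiff.1 hbB').2, h1cB 1 (by simp)]
      · rw [Finset.union_insert]; exact hb1
      · rw [Finset.union_insert]; exact hb2
      · intro k hk; simp at hk
      · intro k hk; simp at hk
    obtain ⟨-, hBeq⟩ := h1max (w+1) A (fun k => insert b (B k)) hAug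
      (fun k hk => subset_rfl) (fun k hk => Finset.subset_insert _ _)
    have := hBeq 1 (by simp)
    have hbB1 : b ∈ B 1 := this ▸ Finset.mem_insert_self b (B 1)
    exact (Finset.mem_sdiff.1 hbB').2 hbB1
  · -- case ℓ ≥ 1
    -- ## Generic facts and abbreviations
    have hwle : w ≤ w' := hw.le
    have hAsub : ∀ k, 1 ≤ k → k ≤ ℓ → A k ⊆ S := fun k hk1 hk2 a ha => hAS k hk1 hk2 a ha
    have hA'sub : ∀ k, 1 ≤ k → k ≤ ℓ → A' k ⊆ S := fun k hk1 hk2 a ha => hA'S k hk1 hk2 a ha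
    have hAA'sub : ∀ k, 1 ≤ k → k ≤ ℓ → A k ∪ A' k ⊆ S := by
      intro k hk1 hk2 x hx
      rcases Finset.mem_union.1 hx with h | h
      · exact hAsub k hk1 hk2 h
      · exact hA'sub k hk1 hk2 h
    have hPcard : ∀ k, 1 ≤ k → k ≤ ℓ →
        w' - w ≤ (A' k \ A k).card ∧ (A' k \ A k).card ≤ w' := by
      intro k hk1 hk2
      have h1 : (A' k).card = w' := h2cA k (Finset.mem_Icc.2 ⟨hk1, hk2⟩)
      have h2 : (A k).card = w := h1cA k (Finset.mem_Icc.2 ⟨hk1, hk2⟩)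
      have h3 := Finset.card_le_card_sdiff_add_card (s := A' k) (t := A k)
      have h4 := Finset.card_le_card (Finset.sdiff_subset (s := A' k) (t := A k))
      omega
    have hAunion : ∀ k, 1 ≤ k → k ≤ ℓ →
        (A k ∪ A' k).card = w + (A' k \ A k).card := by
      intro k hk1 hk2
      have h2 : (A k).card = w := h1cA k (Finset.mem_Icc.2 ⟨hk1, hk2⟩)
      rw [← Finset.union_sdiff_self_eq_union,
        Finset.card_union_of_disjoint Finset.disjoint_sdiff, h2]
    have hgcard : ∀ k, 1 ≤ k → k ≤ ℓ →
        (S \ (A k ∪ A' k)).card + (w + (A' k \ A k).card) = S.card := by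
      intro k hk1 hk2
      rw [Finset.card_sdiff_of_subset (hAA'sub k hk1 hk2), ← hAunion k hk1 hk2]
      have := Finset.card_le_card (hAA'sub k hk1 hk2)
      omega
    -- the K-set constructor
    have hKgen : ∀ (M : FinMatroid α) (Bk B'k : Finset α) (k : ℕ), 1 ≤ k → k ≤ ℓ →
        M.Indep ((S \ (A k ∪ A' k)) ∪ Bk) → M.Indep ((S \ (A k ∪ A' k)) ∪ B'k) →
        Bk.card = w → B'k.card = w' → (∀ b ∈ Bk, b ∉ S) → (∀ b ∈ B'k, b ∉ S) →
        ∃ K, K ⊆ B'k \ Bk ∧ K.card = w' - w ∧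
          M.Indep ((S \ (A k ∪ A' k)) ∪ Bk ∪ K) := by
      intro M Bk B'k k hk1 hk2 hiX hiY hcBk hcB'k hBkS hB'kS
      have hgB : Disjoint (S \ (A k ∪ A' k)) Bk := by
        rw [Finset.disjoint_right]
        intro x hx
        exact fun hm => hBkS x hx (Finset.mem_sdiff.1 hm).1
      have hgB' : Disjoint (S \ (A k ∪ A' k)) B'k := by
        rw [Finset.disjoint_right]
        intro x hx
        exact fun hm => hB'kS x hx (Finset.mem_sdiff.1 hm).1
      have hcX : ((S \ (A k ∪ A' k)) ∪ Bk).card = (S \ (A k ∪ A' k)).card + w := by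
        rw [Finset.card_union_of_disjoint hgB, hcBk]
      have hcY : ((S \ (A k ∪ A' k)) ∪ B'k).card = (S \ (A k ∪ A' k)).card + w' := by
        rw [Finset.card_union_of_disjoint hgB', hcB'k]
      obtain ⟨W, hW1, hW2, hW3, hW4⟩ := fm_grow M (w' - w) _ _ hiX hiY (by omega)
      refine ⟨W \ ((S \ (A k ∪ A' k)) ∪ Bk), ?_, ?_, ?_⟩
      · intro x hx
        rw [Finset.mem_sdiff] at hx
        obtain ⟨hxW, hxX⟩ := hx
        have hx2 := hW2 hxW
        simp only [Finset.mem_union] at hx2 hxX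
        push_neg at hxX
        rw [Finset.mem_sdiff]
        constructor
        · rcases hx2 with (h | h) | (h | h)
          · exact absurd h hxX.1
          · exact absurd h hxX.2
          · exact absurd h hxX.1
          · exact h
        · exact hxX.2
      · rw [Finset.card_sdiff_of_subset hW1]; omega
      · have heq : (S \ (A k ∪ A' k)) ∪ Bk ∪ (W \ ((S \ (A k ∪ A' k)) ∪ Bk)) = W := by
          apply Finset.Subset.antisymm
          · intro x hx
            rcases Finset.mem_union.1 hx with h | h
            · exact hW1 h
            · exact (Finset.mem_sdiff.1 h).1
          · intro x hx
            by_cases hxX : x ∈ (S \ (A k ∪ A' k)) ∪ Bk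
            · exact Finset.mem_union_left _ hxX
            · exact Finset.mem_union_right _ (Finset.mem_sdiff.2 ⟨hx, hxX⟩)
        rw [heq]; exact hW4
    -- K₂ sets
    have hK₂ : ∀ k, 1 ≤ k → k ≤ ℓ → ∃ K, K ⊆ B' k \ B k ∧ K.card = w' - w ∧
        M₂.Indep ((S \ (A k ∪ A' k)) ∪ B k ∪ K) := by
      intro k hk1 hk2
      apply hKgen M₂ (B k) (B' k) k hk1 hk2
      · apply M₂.subset_indep (h1x2 k (Finset.mem_Icc.2 ⟨hk1, hk2⟩))
        apply Finset.union_subset_union_left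
        exact Finset.sdiff_subset_sdiff subset_rfl Finset.subset_union_left
      · apply M₂.subset_indep (h2x2 k (Finset.mem_Icc.2 ⟨hk1, hk2⟩))
        apply Finset.union_subset_union_left
        exact Finset.sdiff_subset_sdiff subset_rfl Finset.subset_union_right
      · exact h1cB k (Finset.mem_Icc.2 ⟨hk1, by omega⟩)
      · exact h2cB k (Finset.mem_Icc.2 ⟨hk1, by omega⟩)
      · exact fun b hb => hBS k hk1 (by omega) b hb
      · exact fun b hb => hB'S k hk1 (by omega) b hb
    -- K₁ sets (layer k+1 on the B side, removal at layer k)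
    have hK₁ : ∀ k, 1 ≤ k → k ≤ ℓ → ∃ K, K ⊆ B' (k+1) \ B (k+1) ∧ K.card = w' - w ∧
        M₁.Indep ((S \ (A k ∪ A' k)) ∪ B (k+1) ∪ K) := by
      intro k hk1 hk2
      apply hKgen M₁ (B (k+1)) (B' (k+1)) k hk1 hk2
      · apply M₁.subset_indep (h1x1 k (Finset.mem_Icc.2 ⟨hk1, hk2⟩))
        apply Finset.union_subset_union_left
        exact Finset.sdiff_subset_sdiff subset_rfl Finset.subset_union_left
      · apply M₁.subset_indep (h2x1 k (Finset.mem_Icc.2 ⟨hk1, hk2⟩))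
        apply Finset.union_subset_union_left
        exact Finset.sdiff_subset_sdiff subset_rfl Finset.subset_union_right
      · exact h1cB (k+1) (Finset.mem_Icc.2 ⟨by omega, by omega⟩)
      · exact h2cB (k+1) (Finset.mem_Icc.2 ⟨by omega, by omega⟩)
      · exact fun b hb => hBS (k+1) (by omega) (by omega) b hb
      · exact fun b hb => hB'S (k+1) (by omega) (by omega) b hb
    have hYsubP : ∀ k, chainY M₁ M₂ S A B A' B' k ⊆ A' k \ A k := by
      intro k
      match k with
      | 0 => simp [chainY]
      | 1 => exact Finset.filter_subset _ _
      | (k+2) => exact Finset.filter_subset _ _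
    -- span counting (layer k, matroid M₂)
    have hspan : ∀ (k : ℕ), 1 ≤ k → k ≤ ℓ → ∀ (G K : Finset α),
        K ⊆ B' k \ B k → M₂.Indep ((S \ (A k ∪ A' k)) ∪ B k ∪ K) → G ⊆ K →
        (∀ b ∈ G, ∀ a ∈ A' k \ A k, M₂.Indep ((insert b ((S \ A k) ∪ B k)).erase a) →
            a ∈ chainY M₁ M₂ S A B A' B' k) →
        (∀ b ∈ G, ¬ M₂.Indep (insert b ((S \ A k) ∪ B k))) →
        G.card ≤ (chainY M₁ M₂ S A B A' B' k).card := by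
      intro k hk1 hk2 G K hKsub hKind hGK hcrit hdep
      have hGB' : ∀ b ∈ G, b ∈ B' k \ B k := fun b hb => hKsub (hGK hb)
      have hGnX : ∀ b ∈ G, b ∉ (S \ A k) ∪ B k := by
        intro b hb hmem
        rcases Finset.mem_union.1 hmem with h | h
        · exact hB'S k hk1 (by omega) b (Finset.mem_sdiff.1 (hGB' b hb)).1 (Finset.mem_sdiff.1 h).1
        · exact (Finset.mem_sdiff.1 (hGB' b hb)).2 h
      have hZsub : (A' k \ A k) \ chainY M₁ M₂ S A B A' B' k ⊆ (S \ A k) ∪ B k := by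
        intro a ha
        rw [Finset.mem_sdiff] at ha
        have haP := Finset.mem_sdiff.1 ha.1
        exact Finset.mem_union_left _ (Finset.mem_sdiff.2 ⟨hA'sub k hk1 hk2 haP.1, haP.2⟩)
      have hrem : ∀ b ∈ G, ¬ M₂.Indep (insert b
          (((S \ A k) ∪ B k) \ ((A' k \ A k) \ chainY M₁ M₂ S A B A' B' k))) := by
        intro b hb
        apply fm_removal M₂ (h1x2 k (Finset.mem_Icc.2 ⟨hk1, hk2⟩)) (hGnX b hb)
          (hdep b hb) hZsub
        intro a ha hind
        rw [Finset.mem_sdiff] at ha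
        exact ha.2 (hcrit b hb a ha.1 hind)
      have hXind : M₂.Indep (((S \ A k) ∪ B k) \ ((A' k \ A k) \ chainY M₁ M₂ S A B A' B' k)) :=
        M₂.subset_indep (h1x2 k (Finset.mem_Icc.2 ⟨hk1, hk2⟩)) (Finset.sdiff_subset)
      have hWind : M₂.Indep ((S \ (A k ∪ A' k)) ∪ B k ∪ G) :=
        M₂.subset_indep hKind (Finset.union_subset_union_right hGK)
      have hcnt := fm_count M₂ (T := G) hXind hWind ?_ ?_
      rotate_left
      · intro x hx
        rcases Finset.mem_union.1 hx with h | h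
        · apply Finset.mem_union_left
          rw [Finset.mem_sdiff]
          constructor
          · rcases Finset.mem_union.1 h with h2 | h2
            · have h3 := Finset.mem_sdiff.1 h2
              exact Finset.mem_union_left _ (Finset.mem_sdiff.2
                ⟨h3.1, fun hA => h3.2 (Finset.mem_union_left _ hA)⟩)
            · exact Finset.mem_union_right _ h2
          · intro hZ
            rw [Finset.mem_sdiff, Finset.mem_sdiff] at hZ
            rcases Finset.mem_union.1 h with h2 | h2
            · exact (Finset.mem_sdiff.1 h2).2 (Finset.mem_union_right _ hZ.1.1)
            · exact hBS k hk1 (by omega) x h2 (hA'sub k hk1 hk2 hZ.1.1)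
        · exact Finset.mem_union_right _ h
      · intro b hb _
        exact hrem b hb
      -- cardinality bookkeeping
      have hd1 : Disjoint (S \ (A k ∪ A' k)) (B k) := by
        rw [Finset.disjoint_right]
        intro x hx hmem
        exact hBS k hk1 (by omega) x hx (Finset.mem_sdiff.1 hmem).1
      have hd2 : Disjoint ((S \ (A k ∪ A' k)) ∪ B k) G := by
        rw [Finset.disjoint_right]
        intro x hx hmem
        rcases Finset.mem_union.1 hmem with h | h
        · exact hB'S k hk1 (by omega) x (Finset.mem_sdiff.1 (hGB' x hx)).1 (Finset.mem_sdiff.1 h).1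
        · exact (Finset.mem_sdiff.1 (hGB' x hx)).2 h
      have hcW : ((S \ (A k ∪ A' k)) ∪ B k ∪ G).card
          = (S \ (A k ∪ A' k)).card + (B k).card + G.card := by
        rw [Finset.card_union_of_disjoint hd2, Finset.card_union_of_disjoint hd1]
      have hZP : (A' k \ A k) \ chainY M₁ M₂ S A B A' B' k ⊆ (S \ A k) ∪ B k := hZsub
      have hcX : (((S \ A k) ∪ B k) \ ((A' k \ A k) \ chainY M₁ M₂ S A B A' B' k)).card
          = ((S \ A k) ∪ B k).card
            - ((A' k \ A k).card - (chainY M₁ M₂ S A B A' B' k).card) := by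
        rw [Finset.card_sdiff_of_subset hZP, Finset.card_sdiff_of_subset (hYsubP k)]
      have hcSB : ((S \ A k) ∪ B k).card = (S.card - w) + w := by
        have hdSB : Disjoint (S \ A k) (B k) := by
          rw [Finset.disjoint_right]
          intro x hx hmem
          exact hBS k hk1 (by omega) x hx (Finset.mem_sdiff.1 hmem).1
        rw [Finset.card_union_of_disjoint hdSB, Finset.card_sdiff_of_subset (hAsub k hk1 hk2),
          h1cA k (Finset.mem_Icc.2 ⟨hk1, hk2⟩), h1cB k (Finset.mem_Icc.2 ⟨hk1, by omega⟩)]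
      have hcBk : (B k).card = w := h1cB k (Finset.mem_Icc.2 ⟨hk1, by omega⟩)
      have hgc := hgcard k hk1 hk2
      have hYP := Finset.card_le_card (hYsubP k)
      have hPS : (A' k \ A k).card + w ≤ S.card := by omega
      have hwS : w ≤ S.card := by
        have := Finset.card_le_card (hAsub k hk1 hk2)
        rw [h1cA k (Finset.mem_Icc.2 ⟨hk1, hk2⟩)] at this
        exact this
      omega
    -- chain counting (removal layer k, B layer k+1, matroid M₁)
    have hchaincnt : ∀ (k : ℕ), 1 ≤ k → k ≤ ℓ → ∀ (G K : Finset α),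
        K ⊆ B' (k+1) \ B (k+1) → M₁.Indep ((S \ (A k ∪ A' k)) ∪ B (k+1) ∪ K) → G ⊆ K →
        (∀ b ∈ G, ∀ a ∈ chainY M₁ M₂ S A B A' B' k,
            ¬ M₁.Indep ((insert b ((S \ A k) ∪ B (k+1))).erase a)) →
        (∀ b ∈ G, ¬ M₁.Indep (insert b ((S \ A k) ∪ B (k+1)))) →
        G.card + (chainY M₁ M₂ S A B A' B' k).card ≤ (A' k \ A k).card := by
      intro k hk1 hk2 G K hKsub hKind hGK hcrit hdep
      have hGB' : ∀ b ∈ G, b ∈ B' (k+1) \ B (k+1) := fun b hb => hKsub (hGK hb)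
      have hGnX : ∀ b ∈ G, b ∉ (S \ A k) ∪ B (k+1) := by
        intro b hb hmem
        rcases Finset.mem_union.1 hmem with h | h
        · exact hB'S (k+1) (by omega) (by omega) b
            (Finset.mem_sdiff.1 (hGB' b hb)).1 (Finset.mem_sdiff.1 h).1
        · exact (Finset.mem_sdiff.1 (hGB' b hb)).2 h
      have hZsub : chainY M₁ M₂ S A B A' B' k ⊆ (S \ A k) ∪ B (k+1) := by
        intro a ha
        have haP := Finset.mem_sdiff.1 (hYsubP k ha)
        exact Finset.mem_union_left _ (Finset.mem_sdiff.2 ⟨hA'sub k hk1 hk2 haP.1, haP.2⟩)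
      have hrem : ∀ b ∈ G, ¬ M₁.Indep (insert b
          (((S \ A k) ∪ B (k+1)) \ chainY M₁ M₂ S A B A' B' k)) := by
        intro b hb
        apply fm_removal M₁ (h1x1 k (Finset.mem_Icc.2 ⟨hk1, hk2⟩)) (hGnX b hb)
          (hdep b hb) hZsub
        intro a ha
        exact hcrit b hb a ha
      have hXind : M₁.Indep (((S \ A k) ∪ B (k+1)) \ chainY M₁ M₂ S A B A' B' k) :=
        M₁.subset_indep (h1x1 k (Finset.mem_Icc.2 ⟨hk1, hk2⟩)) (Finset.sdiff_subset)
      have hWind : M₁.Indep ((S \ (A k ∪ A' k)) ∪ B (k+1) ∪ G) :=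
        M₁.subset_indep hKind (Finset.union_subset_union_right hGK)
      have hcnt := fm_count M₁ (T := G) hXind hWind ?_ ?_
      rotate_left
      · intro x hx
        rcases Finset.mem_union.1 hx with h | h
        · apply Finset.mem_union_left
          rw [Finset.mem_sdiff]
          constructor
          · rcases Finset.mem_union.1 h with h2 | h2
            · have h3 := Finset.mem_sdiff.1 h2
              exact Finset.mem_union_left _ (Finset.mem_sdiff.2
                ⟨h3.1, fun hA => h3.2 (Finset.mem_union_left _ hA)⟩)
            · exact Finset.mem_union_right _ h2
          · intro hZ
            have hZ2 := Finset.mem_sdiff.1 (hYsubP k hZ)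
            rcases Finset.mem_union.1 h with h2 | h2
            · exact (Finset.mem_sdiff.1 h2).2 (Finset.mem_union_right _ hZ2.1)
            · exact hBS (k+1) (by omega) (by omega) x h2 (hA'sub k hk1 hk2 hZ2.1)
        · exact Finset.mem_union_right _ h
      · intro b hb _
        exact hrem b hb
      have hd1 : Disjoint (S \ (A k ∪ A' k)) (B (k+1)) := by
        rw [Finset.disjoint_right]
        intro x hx hmem
        exact hBS (k+1) (by omega) (by omega) x hx (Finset.mem_sdiff.1 hmem).1
      have hd2 : Disjoint ((S \ (A k ∪ A' k)) ∪ B (k+1)) G := by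
        rw [Finset.disjoint_right]
        intro x hx hmem
        rcases Finset.mem_union.1 hmem with h | h
        · exact hB'S (k+1) (by omega) (by omega) x
            (Finset.mem_sdiff.1 (hGB' x hx)).1 (Finset.mem_sdiff.1 h).1
        · exact (Finset.mem_sdiff.1 (hGB' x hx)).2 h
      have hcW : ((S \ (A k ∪ A' k)) ∪ B (k+1) ∪ G).card
          = (S \ (A k ∪ A' k)).card + (B (k+1)).card + G.card := by
        rw [Finset.card_union_of_disjoint hd2, Finset.card_union_of_disjoint hd1]
      have hcX : (((S \ A k) ∪ B (k+1)) \ chainY M₁ M₂ S A B A' B' k).card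
          = ((S \ A k) ∪ B (k+1)).card - (chainY M₁ M₂ S A B A' B' k).card := by
        rw [Finset.card_sdiff_of_subset hZsub]
      have hcSB : ((S \ A k) ∪ B (k+1)).card = (S.card - w) + w := by
        have hdSB : Disjoint (S \ A k) (B (k+1)) := by
          rw [Finset.disjoint_right]
          intro x hx hmem
          exact hBS (k+1) (by omega) (by omega) x hx (Finset.mem_sdiff.1 hmem).1
        rw [Finset.card_union_of_disjoint hdSB, Finset.card_sdiff_of_subset (hAsub k hk1 hk2),
          h1cA k (Finset.mem_Icc.2 ⟨hk1, hk2⟩), h1cB (k+1) (Finset.mem_Icc.2 ⟨by omega, by omega⟩)]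
      have hcBk : (B (k+1)).card = w := h1cB (k+1) (Finset.mem_Icc.2 ⟨by omega, by omega⟩)
      have hgc := hgcard k hk1 hk2
      have hYP := Finset.card_le_card (hYsubP k)
      have hPS : (A' k \ A k).card + w ≤ S.card := by omega
      have hwS : w ≤ S.card := by
        have := Finset.card_le_card (hAsub k hk1 hk2)
        rw [h1cA k (Finset.mem_Icc.2 ⟨hk1, hk2⟩)] at this
        exact this
      omega
    -- the main counting invariant
    have hCNT : ∀ k, 1 ≤ k → k ≤ ℓ →
        (A' k \ A k).card ≤ (chainY M₁ M₂ S A B A' B' k).card + 2*k*w := by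
      intro k
      induction k with
      | zero => omega
      | succ k ih =>
        intro hk1 hk2
        obtain ⟨K2, hK2sub, hK2card, hK2ind⟩ := hK₂ (k+1) (by omega) hk2
        rcases Nat.eq_zero_or_pos k with rfl | hkpos
        · -- base : layer 1
          show (A' 1 \ A 1).card ≤ (chainY M₁ M₂ S A B A' B' 1).card + 2*1*w
          set G := K2.filter (fun b => M₁.Indep (insert b (S ∪ B 1))) with hG
          have hGsub : G ⊆ K2 := Finset.filter_subset _ _
          have hbadind : M₁.Indep (S ∪ (K2 \ G)) := by
            apply M₁.subset_indep h2i1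
            intro x hx
            rcases Finset.mem_union.1 hx with h | h
            · exact Finset.mem_union_left _ h
            · exact Finset.mem_union_right _
                (Finset.mem_sdiff.1 (hK2sub (Finset.mem_sdiff.1 h).1)).1
          have hbadc : (K2 \ G).card ≤ w := by
            have hd1 : Disjoint S (B 1) := by
              rw [Finset.disjoint_right]; intro x hx; exact hBS 1 le_rfl (by omega) x hx
            have hd2 : Disjoint S (K2 \ G) := by
              rw [Finset.disjoint_right]; intro x hx
              exact hB'S 1 le_rfl (by omega) x
                (Finset.mem_sdiff.1 (hK2sub (Finset.mem_sdiff.1 hx).1)).1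
            have hcnt := fm_count M₁ (T := K2 \ G) h1i1 hbadind
              (by intro x hx; rcases Finset.mem_union.1 hx with h | h
                  · exact Finset.mem_union_left _ (Finset.mem_union_left _ h)
                  · exact Finset.mem_union_right _ h)
              (by intro b hb _
                  have hb2 := Finset.mem_sdiff.1 hb
                  intro hind
                  exact hb2.2 (Finset.mem_filter.2 ⟨hb2.1, hind⟩))
            rw [Finset.card_union_of_disjoint hd1, Finset.card_union_of_disjoint hd2,
              h1cB 1 (Finset.mem_Icc.2 ⟨le_rfl, by omega⟩)] at hcnt
            omega
          have hGcard : (K2.card - w) ≤ G.card := by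
            have := Finset.card_sdiff_of_subset hGsub
            omega
          have hP1 := hPcard 1 le_rfl hk2
          by_cases hex : ∃ b ∈ G, M₂.Indep (insert b ((S \ A 1) ∪ B 1))
          · obtain ⟨b, hbG, hbind⟩ := hex
            have hYfull : A' 1 \ A 1 ⊆ chainY M₁ M₂ S A B A' B' 1 := by
              intro a ha
              show a ∈ (A' 1 \ A 1).filter _
              refine Finset.mem_filter.2 ⟨ha, b, hK2sub (hGsub hbG), ?_, ?_⟩
              · exact (Finset.mem_filter.1 hbG).2
              · exact M₂.subset_indep hbind (Finset.erase_subset _ _)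
            have := Finset.card_le_card hYfull
            omega
          · push_neg at hex
            have hsp := hspan 1 le_rfl hk2 G K2 hK2sub hK2ind hGsub ?_ hex
            · omega
            · intro b hb a ha hind
              show a ∈ (A' 1 \ A 1).filter _
              refine Finset.mem_filter.2 ⟨ha, b, hK2sub (hGsub hb), ?_, hind⟩
              exact (Finset.mem_filter.1 hb).2
        · -- step : layer k+1 with k ≥ 1
          obtain ⟨k', rfl⟩ : ∃ k', k = k' + 1 := ⟨k - 1, by omega⟩
          show (A' (k'+2) \ A (k'+2)).card ≤ (chainY M₁ M₂ S A B A' B' (k'+2)).card + 2*(k'+2)*w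
          have ihk := ih (by omega) (by omega)
          obtain ⟨K1, hK1sub, hK1card, hK1ind⟩ := hK₁ (k'+1) (by omega) (by omega)
          have hPk := hPcard (k'+1) (by omega) (by omega)
          have hmulk : 2*(k'+1)*w ≤ 2*ℓ*w := Nat.mul_le_mul_right w (by omega)
          have hmul4 : (2*ℓ+4)*w = 2*ℓ*w + 4*w := by ring
          have hYne : (chainY M₁ M₂ S A B A' B' (k'+1)).Nonempty := by
            rw [← Finset.card_pos]
            omega
          set Gc := (K1 ∩ K2).filter (fun b => ∃ a ∈ chainY M₁ M₂ S A B A' B' (k'+1),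
            M₁.Indep ((insert b ((S \ A (k'+1)) ∪ B (k'+2))).erase a)) with hGc
          have hGcsub : Gc ⊆ K1 ∩ K2 := Finset.filter_subset _ _
          have hbadcnt := hchaincnt (k'+1) (by omega) (by omega) ((K1 ∩ K2) \ Gc) K1
            hK1sub hK1ind
            (fun x hx => Finset.inter_subset_left (Finset.mem_sdiff.1 hx).1)
            ?_ ?_
          rotate_left
          · intro b hb a ha hind
            have hb2 := Finset.mem_sdiff.1 hb
            exact absurd (Finset.mem_filter.2 ⟨hb2.1, a, ha, hind⟩) hb2.2
          · intro b hb hind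
            have hb2 := Finset.mem_sdiff.1 hb
            obtain ⟨a, ha⟩ := hYne
            exact absurd (Finset.mem_filter.2 ⟨hb2.1, a, ha,
              M₁.subset_indep hind (Finset.erase_subset _ _)⟩) hb2.2
          have hKK : w' - 2*w ≤ (K1 ∩ K2).card := by
            have h1 := Finset.card_union_add_card_inter K1 K2
            have h2 : (K1 ∪ K2).card ≤ w' := by
              have hsub : K1 ∪ K2 ⊆ B' (k'+2) := by
                intro x hx
                rcases Finset.mem_union.1 hx with h | h
                · exact (Finset.mem_sdiff.1 (hK1sub h)).1
                · exact (Finset.mem_sdiff.1 (hK2sub h)).1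
              have := Finset.card_le_card hsub
              rw [h2cB (k'+2) (Finset.mem_Icc.2 ⟨by omega, by omega⟩)] at this
              exact this
            omega
          have hGccard : (K1 ∩ K2).card - ((A' (k'+1) \ A (k'+1)).card
              - (chainY M₁ M₂ S A B A' B' (k'+1)).card) ≤ Gc.card := by
            have := Finset.card_sdiff_of_subset hGcsub
            omega
          have hPk2 := hPcard (k'+2) (by omega) hk2
          by_cases hex : ∃ b ∈ Gc, M₂.Indep (insert b ((S \ A (k'+2)) ∪ B (k'+2)))
          · obtain ⟨b, hbG, hbind⟩ := hex
            have hYfull : A' (k'+2) \ A (k'+2) ⊆ chainY M₁ M₂ S A B A' B' (k'+2) := by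
              intro a ha
              show a ∈ (A' (k'+2) \ A (k'+2)).filter _
              refine Finset.mem_filter.2 ⟨ha, b, hK2sub (Finset.inter_subset_right (hGcsub hbG)), ?_, ?_⟩
              · exact (Finset.mem_filter.1 hbG).2
              · exact M₂.subset_indep hbind (Finset.erase_subset _ _)
            have := Finset.card_le_card hYfull
            omega
          · push_neg at hex
            have hsp := hspan (k'+2) (by omega) hk2 Gc K2 hK2sub hK2ind
              (fun x hx => Finset.inter_subset_right (hGcsub hx)) ?_ hex
            · have hmul2 : 2*(k'+2)*w = 2*(k'+1)*w + 2*w := by ring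
              omega
            · intro b hb a ha hind
              show a ∈ (A' (k'+2) \ A (k'+2)).filter _
              refine Finset.mem_filter.2 ⟨ha, b, hK2sub (Finset.inter_subset_right (hGcsub hb)), ?_, hind⟩
              exact (Finset.mem_filter.1 hb).2
    -- backward chain extraction
    have hchain : ∀ k, 1 ≤ k → k ≤ ℓ → ∀ a ∈ chainY M₁ M₂ S A B A' B' k,
        ∃ bb aa : ℕ → α, aa k = a
          ∧ (∀ i, 1 ≤ i → i ≤ k → bb i ∈ B' i \ B i)
          ∧ (∀ i, 1 ≤ i → i ≤ k → aa i ∈ A' i \ A i)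
          ∧ M₁.Indep (insert (bb 1) (S ∪ B 1))
          ∧ (∀ i, 1 ≤ i → i ≤ k → M₂.Indep ((insert (bb i) ((S \ A i) ∪ B i)).erase (aa i)))
          ∧ (∀ i, 2 ≤ i → i ≤ k →
              M₁.Indep ((insert (bb i) ((S \ A (i-1)) ∪ B i)).erase (aa (i-1)))) := by
      intro k
      induction k with
      | zero => omega
      | succ k ih =>
        intro hk1 hk2 a ha
        rcases Nat.eq_zero_or_pos k with rfl | hkpos
        · -- k + 1 = 1
          obtain ⟨haP, b, hbB, hbM₁, hbM₂⟩ :=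
            Finset.mem_filter.1 (show a ∈ (A' 1 \ A 1).filter _ from ha)
          refine ⟨fun _ => b, fun _ => a, rfl, ?_, ?_, hbM₁, ?_, ?_⟩
          · intro i hi1 hi2
            have : i = 1 := by omega
            subst this; exact hbB
          · intro i hi1 hi2
            have : i = 1 := by omega
            subst this; exact haP
          · intro i hi1 hi2
            have : i = 1 := by omega
            subst this; exact hbM₂
          · intro i hi1 hi2; omega
        · obtain ⟨k', rfl⟩ : ∃ k', k = k' + 1 := ⟨k - 1, by omega⟩
          obtain ⟨haP, b, hbB, hfirst, hM₂e⟩ :=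
            Finset.mem_filter.1 (show a ∈ (A' (k'+2) \ A (k'+2)).filter _ from ha)
          obtain ⟨a', ha'Y, hM₁e⟩ := hfirst
          obtain ⟨bb, aa, haa, hbbB, haaA, hbb1, hM₂c, hM₁c⟩ := ih (by omega) (by omega) a' ha'Y
          refine ⟨fun i => if i = k'+2 then b else bb i,
            fun i => if i = k'+2 then a else aa i, by simp, ?_, ?_, ?_, ?_, ?_⟩
          · intro i hi1 hi2
            by_cases hieq : i = k'+2
            · subst hieq; simp only [if_pos rfl]; exact hbB
            · simp only [if_neg hieq]; exact hbbB i hi1 (by omega)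
          · intro i hi1 hi2
            by_cases hieq : i = k'+2
            · subst hieq; simp only [if_pos rfl]; exact haP
            · simp only [if_neg hieq]; exact haaA i hi1 (by omega)
          · simp only [if_neg (by omega : ¬ (1:ℕ) = k'+2)]; exact hbb1
          · intro i hi1 hi2
            by_cases hieq : i = k'+2
            · subst hieq; simp only [if_pos rfl]; exact hM₂e
            · simp only [if_neg hieq]; exact hM₂c i hi1 (by omega)
          · intro i hi1 hi2
            by_cases hieq : i = k'+2
            · subst hieq
              simp only [if_pos rfl]
              have hidx : k'+2-1 = k'+1 := by omega
              rw [hidx]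
              simp only [if_neg (by omega : ¬ k'+1 = k'+2), haa]
              exact hM₁e
            · simp only [if_neg hieq, if_neg (show ¬ i-1 = k'+2 by omega)]
              exact hM₁c i hi1 (by omega)
    -- ## endgame
    obtain ⟨KL, hKL1, hKL2, hKL3⟩ := hK₁ ℓ hl1 le_rfl
    have hYl := hCNT ℓ hl1 le_rfl
    have hPl := hPcard ℓ hl1 le_rfl
    have hmul : (2*ℓ+4)*w = 2*ℓ*w + 4*w := by ring
    have hYlne : (chainY M₁ M₂ S A B A' B' ℓ).Nonempty := by
      rw [← Finset.card_pos]
      omega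
    set bad2 := KL.filter (fun b => ¬ M₂.Indep (insert b (S ∪ B (ℓ+1)))) with hbad2
    have hbad2c : bad2.card ≤ w := by
      have hWind : M₂.Indep (S ∪ bad2) := by
        apply M₂.subset_indep h2i2
        intro x hx
        rcases Finset.mem_union.1 hx with h | h
        · exact Finset.mem_union_left _ h
        · exact Finset.mem_union_right _
            (Finset.mem_sdiff.1 (hKL1 (Finset.mem_filter.1 h).1)).1
      have hd1 : Disjoint S (B (ℓ+1)) := by
        rw [Finset.disjoint_right]; intro x hx; exact hBS (ℓ+1) (by omega) le_rfl x hx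
      have hd2 : Disjoint S bad2 := by
        rw [Finset.disjoint_right]; intro x hx
        exact hB'S (ℓ+1) (by omega) le_rfl x (Finset.mem_sdiff.1 (hKL1 (Finset.mem_filter.1 hx).1)).1
      have hcnt := fm_count M₂ (T := bad2) h1i2 hWind
        (by intro x hx; rcases Finset.mem_union.1 hx with h | h
            · exact Finset.mem_union_left _ (Finset.mem_union_left _ h)
            · exact Finset.mem_union_right _ h)
        (by intro b hb _; exact (Finset.mem_filter.1 hb).2)
      rw [Finset.card_union_of_disjoint hd1, Finset.card_union_of_disjoint hd2,
        h1cB (ℓ+1) (Finset.mem_Icc.2 ⟨by omega, le_rfl⟩)] at hcnt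
      omega
    set badc := KL.filter (fun b => ¬ ∃ a ∈ chainY M₁ M₂ S A B A' B' ℓ,
        M₁.Indep ((insert b ((S \ A ℓ) ∪ B (ℓ+1))).erase a)) with hbadc
    have hbadcc : badc.card + (chainY M₁ M₂ S A B A' B' ℓ).card ≤ (A' ℓ \ A ℓ).card := by
      apply hchaincnt ℓ hl1 le_rfl badc KL hKL1 hKL3 (Finset.filter_subset _ _)
      · intro b hb a ha hind
        have := (Finset.mem_filter.1 hb).2
        push_neg at this
        exact this a ha hind
      · intro b hb hind
        have hbb := (Finset.mem_filter.1 hb).2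
        push_neg at hbb
        obtain ⟨a, ha⟩ := hYlne
        exact hbb a ha (M₁.subset_indep hind (Finset.erase_subset _ _))
    have hgoodend : (KL \ (bad2 ∪ badc)).Nonempty := by
      rw [← Finset.card_pos]
      have h1 := Finset.card_le_card_sdiff_add_card (s := KL) (t := bad2 ∪ badc)
      have h2 := Finset.card_union_le bad2 badc
      omega
    obtain ⟨bp, hbp⟩ := hgoodend
    rw [Finset.mem_sdiff, Finset.mem_union] at hbp
    push_neg at hbp
    obtain ⟨hbpK, hbp2, hbpc⟩ := hbp
    have hbpB' : bp ∈ B' (ℓ+1) \ B (ℓ+1) := hKL1 hbpK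
    have hbpM₂ : M₂.Indep (insert bp (S ∪ B (ℓ+1))) := by
      by_contra hc
      exact hbp2 (Finset.mem_filter.2 ⟨hbpK, hc⟩)
    have hbpM₁ : ∃ a ∈ chainY M₁ M₂ S A B A' B' ℓ,
        M₁.Indep ((insert bp ((S \ A ℓ) ∪ B (ℓ+1))).erase a) := by
      by_contra hc
      exact hbpc (Finset.mem_filter.2 ⟨hbpK, hc⟩)
    obtain ⟨al, halY, halM₁⟩ := hbpM₁
    obtain ⟨bb, aa, haal, hbbB, haaA, hbb1, hM₂c, hM₁c⟩ := hchain ℓ hl1 le_rfl al halY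
    -- the extended chain functions
    set bbf : ℕ → α := fun i => if i = ℓ+1 then bp else bb i with hbbf
    have hbbf_low : ∀ i, i ≤ ℓ → bbf i = bb i := by
      intro i hi; rw [hbbf]; simp only [if_neg (by omega : ¬ i = ℓ+1)]
    have hbbf_top : bbf (ℓ+1) = bp := by rw [hbbf]; simp
    -- distances of the new layers
    have hdA₀ : ∀ k ∈ Finset.Icc 1 ℓ, ∀ x ∈ insert (aa k) (A k),
        egDist M₁ M₂ S EGV.src (EGV.el x) = ((2*k : ℕ) : ℕ∞) := by
      intro k hk x hx
      rw [Finset.mem_Icc] at hk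
      rcases Finset.mem_insert.1 hx with rfl | hx
      · exact h2dA k (Finset.mem_Icc.2 hk) _
          (Finset.mem_sdiff.1 (haaA k hk.1 hk.2)).1
      · exact h1dA k (Finset.mem_Icc.2 hk) _ hx
    have hdB₀ : ∀ k ∈ Finset.Icc 1 (ℓ+1), ∀ x ∈ insert (bbf k) (B k),
        egDist M₁ M₂ S EGV.src (EGV.el x) = ((2*k - 1 : ℕ) : ℕ∞) := by
      intro k hk x hx
      rw [Finset.mem_Icc] at hk
      rcases Finset.mem_insert.1 hx with rfl | hx
      · by_cases hkl : k = ℓ+1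
        · subst hkl
          rw [hbbf_top]
          exact h2dB (ℓ+1) (Finset.mem_Icc.2 ⟨by omega, le_rfl⟩) _ (Finset.mem_sdiff.1 hbpB').1
        · rw [hbbf_low k (by omega)]
          exact h2dB k (Finset.mem_Icc.2 hk) _
            (Finset.mem_sdiff.1 (hbbB k hk.1 (by omega))).1
      · exact h1dB k (Finset.mem_Icc.2 hk) _ hx
    have hbbf_mem : ∀ k, 1 ≤ k → k ≤ ℓ+1 → bbf k ∈ B' k \ B k := by
      intro k hk1 hk2
      by_cases hkl : k = ℓ+1
      · subst hkl; rw [hbbf_top]; exact hbpB'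
      · rw [hbbf_low k (by omega)]; exact hbbB k hk1 (by omega)
    have hAug : IsAugSet M₁ M₂ S ℓ (w+1)
        (fun k => insert (aa k) (A k)) (fun k => insert (bbf k) (B k)) := by
      refine ⟨hdA₀, hdB₀, ?_, ?_, ?_, ?_, ?_, ?_, ?_, ?_, ?_⟩
      · intro i hi j hj hij
        refine hdisj _ _ (2*i) (2*j) (hdA₀ i hi) (hdA₀ j hj) (by omega)
      · intro i hi j hj hij
        rw [Finset.mem_Icc] at hi hj
        refine hdisj _ _ (2*i-1) (2*j-1) (hdB₀ i (Finset.mem_Icc.2 hi))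
          (hdB₀ j (Finset.mem_Icc.2 hj)) (by omega)
      · intro i hi j hj
        rw [Finset.mem_Icc] at hi hj
        refine hdisj _ _ (2*i) (2*j-1) (hdA₀ i (Finset.mem_Icc.2 hi))
          (hdB₀ j (Finset.mem_Icc.2 hj)) (by omega)
      · intro k hk
        rw [Finset.mem_Icc] at hk
        rw [Finset.card_insert_of_notMem (Finset.mem_sdiff.1 (haaA k hk.1 hk.2)).2,
          h1cA k (Finset.mem_Icc.2 hk)]
      · intro k hk
        rw [Finset.mem_Icc] at hk
        rw [Finset.card_insert_of_notMem (Finset.mem_sdiff.1 (hbbf_mem k hk.1 hk.2)).2,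
          h1cB k (Finset.mem_Icc.2 hk)]
      · rw [Finset.union_insert, hbbf_low 1 hl1]
        exact hbb1
      · rw [Finset.union_insert, hbbf_top]
        exact hbpM₂
      · intro k hk
        rw [Finset.mem_Icc] at hk
        have haS : aa k ∈ S := hA'S k hk.1 hk.2 _ (Finset.mem_sdiff.1 (haaA k hk.1 hk.2)).1
        have hbnS : bbf (k+1) ∉ S := hB'S (k+1) (by omega) (by omega) _
          (Finset.mem_sdiff.1 (hbbf_mem (k+1) (by omega) (by omega))).1
        rw [hseteq (A k) (B (k+1)) (aa k) (bbf (k+1))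
          (fun hmem => hBS (k+1) (by omega) (by omega) _ hmem haS)
          (fun heq => hbnS (heq ▸ haS))]
        by_cases hkl : k = ℓ
        · subst hkl
          rw [hbbf_top, haal]
          exact halM₁
        · rw [hbbf_low (k+1) (by omega)]
          have := hM₁c (k+1) (by omega) (by omega)
          simpa using this
      · intro k hk
        rw [Finset.mem_Icc] at hk
        have haS : aa k ∈ S := hA'S k hk.1 hk.2 _ (Finset.mem_sdiff.1 (haaA k hk.1 hk.2)).1
        have hbnS : bbf k ∉ S := hB'S k hk.1 (by omega) _
          (Finset.mem_sdiff.1 (hbbf_mem k hk.1 (by omega))).1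
        rw [hseteq (A k) (B k) (aa k) (bbf k)
          (fun hmem => hBS k hk.1 (by omega) _ hmem haS)
          (fun heq => hbnS (heq ▸ haS))]
        rw [hbbf_low k hk.2]
        exact hM₂c k hk.1 hk.2
    obtain ⟨-, hBeq⟩ := h1max (w+1) _ _ hAug
      (fun k _ => Finset.subset_insert _ _) (fun k _ => Finset.subset_insert _ _)
    have h1eq := hBeq 1 (Finset.mem_Icc.2 ⟨le_rfl, by omega⟩)
    have : bbf 1 ∈ B 1 := h1eq ▸ Finset.mem_insert_self _ _
    rw [hbbf_low 1 hl1] at this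
    exact (Finset.mem_sdiff.1 (hbbB 1 le_rfl hl1)).2 this
end
end

section
/- Let K ⊆ ℝⁿ be a compact convex set and f : K → ℝ convex, and suppose there is C_f such that f(u + γ(v−u)) ≤ f(u) + ⟨∇f(u), γ(v−u)⟩ + γ²C_f/2 for all u, v ∈ K and γ ∈ [0,1]. Then the Frank–Wolfe iteration x_{k+1} = x_k + γ_k(z_k − x_k), where z_k ∈ argmin_{z∈K} ⟨∇f(x_k), z⟩ and γ_k = 2/(k+2), satisfies f(x_k) ≤ min_{x∈K} f(x) + 2C_f/(k+2) for all k ≥ 1. -/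
open scoped RealInnerProductSpace

/-- Gradient inequality for a convex function. -/
lemma grad_inner_le_aux {n : ℕ} {K : Set (EuclideanSpace ℝ (Fin n))}
    {f : EuclideanSpace ℝ (Fin n) → ℝ} (hKconv : Convex ℝ K)
    (hfconv : ConvexOn ℝ K f) {u y : EuclideanSpace ℝ (Fin n)}
    (hu : u ∈ K) (hy : y ∈ K) (hd : DifferentiableAt ℝ f u) :
    ⟪gradient f u, y - u⟫ ≤ f y - f u := by
  set g : ℝ → ℝ := fun t => f (u + t • (y - u)) with hg
  have hF : HasFDerivAt f (InnerProductSpace.toDual ℝ _ (gradient f u)) u :=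
    (hasGradientAt_iff_hasFDerivAt).mp hd.hasGradientAt
  have hc : HasDerivAt (fun t : ℝ => u + t • (y - u)) (y - u) 0 := by
    simpa using ((hasDerivAt_id (0:ℝ)).smul_const (y - u)).const_add u
  have hgd : HasDerivAt g ⟪gradient f u, y - u⟫ 0 := by
    have h0 : (fun t : ℝ => u + t • (y - u)) 0 = u := by simp
    have := (h0 ▸ hF).comp_hasDerivAt (0:ℝ) hc
    simpa [g, InnerProductSpace.toDual_apply_apply, Function.comp_def] using this
  have hconv : ConvexOn ℝ (Set.Icc (0:ℝ) 1) g := by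
    have := hfconv.comp_affineMap (AffineMap.lineMap u y)
    refine (this.subset (fun t ht => ?_) (convex_Icc 0 1)).congr ?_
    · rw [Set.mem_preimage, AffineMap.lineMap_apply_module]
      exact hKconv hu hy (by linarith [ht.2]) ht.1 (by ring)
    · intro t ht
      simp only [Function.comp, g, AffineMap.lineMap_apply_module]
      congr 1
      module
  have := hconv.le_slope_of_hasDerivAt (Set.left_mem_Icc.2 zero_le_one)
    (Set.right_mem_Icc.2 zero_le_one) zero_lt_one hgd
  simpa [g, slope_def_field] using this
/-- Frank–Wolfe convergence: on a compact convex `K ⊆ ℝⁿ`, for a differentiable convex `f`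
with curvature constant `C_f`, the iteration `x_{k+1} = x_k + γ_k (z_k − x_k)` with
`z_k ∈ argmin_{z ∈ K} ⟨∇f(x_k), z⟩` and `γ_k = 2/(k+2)` satisfies
`f(x_k) ≤ min_{x ∈ K} f + 2 C_f/(k+2)` for all `k ≥ 1`. -/

theorem frank_wolfe {n : ℕ} (K : Set (EuclideanSpace ℝ (Fin n)))
    (f : EuclideanSpace ℝ (Fin n) → ℝ) (Cf : ℝ)
    (hKcomp : IsCompact K) (hKconv : Convex ℝ K)
    (hfconv : ConvexOn ℝ K f)
    (hdiff : ∀ u ∈ K, DifferentiableAt ℝ f u)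
    (hcurv : ∀ u ∈ K, ∀ v ∈ K, ∀ γ ∈ Set.Icc (0 : ℝ) 1,
      f (u + γ • (v - u)) ≤ f u + ⟪gradient f u, γ • (v - u)⟫ + γ ^ 2 * Cf / 2)
    (x z : ℕ → EuclideanSpace ℝ (Fin n))
    (hx0 : x 0 ∈ K)
    (hzK : ∀ k, z k ∈ K)
    (hzmin : ∀ k, ∀ y ∈ K, ⟪gradient f (x k), z k⟫ ≤ ⟪gradient f (x k), y⟫)
    (hstep : ∀ k : ℕ, x (k + 1) = x k + (2 / ((k : ℝ) + 2)) • (z k - x k)) :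
    ∀ k : ℕ, 1 ≤ k → ∀ y ∈ K, f (x k) ≤ f y + 2 * Cf / ((k : ℝ) + 2) := by
  -- Cf is nonnegative
  have hCf : 0 ≤ Cf := by
    have := hcurv (x 0) hx0 (x 0) hx0 1 ⟨zero_le_one, le_refl 1⟩
    simp at this
    linarith
  -- step sizes are in [0,1]
  have hγ : ∀ k : ℕ, 2 / ((k : ℝ) + 2) ∈ Set.Icc (0:ℝ) 1 := by
    intro k
    have h2 : (0:ℝ) < (k:ℝ) + 2 := by positivity
    constructor
    · positivity
    · rw [div_le_one h2]; linarith [Nat.cast_nonneg (α := ℝ) k]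
  -- iterates stay in K
  have hxK : ∀ k, x k ∈ K := by
    intro k
    induction k with
    | zero => exact hx0
    | succ k ih =>
      rw [hstep k]
      set γ := 2 / ((k : ℝ) + 2)
      have : x k + γ • (z k - x k) = (1 - γ) • x k + γ • z k := by module
      rw [this]
      exact hKconv ih (hzK k) (by linarith [(hγ k).2]) (hγ k).1 (by ring)
  -- the key recurrence
  intro k hk y hy
  have hrec : ∀ m : ℕ, f (x (m + 1)) - f y ≤
      (1 - 2 / ((m : ℝ) + 2)) * (f (x m) - f y) + (2 / ((m : ℝ) + 2)) ^ 2 * Cf / 2 := by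
    intro m
    set γ := 2 / ((m : ℝ) + 2) with hγdef
    have hmain := hcurv (x m) (hxK m) (z m) (hzK m) γ (hγ m)
    rw [← hstep m] at hmain
    have hinner : ⟪gradient f (x m), γ • (z m - x m)⟫ = γ * ⟪gradient f (x m), z m - x m⟫ :=
      real_inner_smul_right _ _ _
    have h1 : ⟪gradient f (x m), z m - x m⟫ ≤ f y - f (x m) := by
      calc ⟪gradient f (x m), z m - x m⟫
          = ⟪gradient f (x m), z m⟫ - ⟪gradient f (x m), x m⟫ := inner_sub_right _ _ _
        _ ≤ ⟪gradient f (x m), y⟫ - ⟪gradient f (x m), x m⟫ := by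
            linarith [hzmin m y hy]
        _ = ⟪gradient f (x m), y - x m⟫ := (inner_sub_right _ _ _).symm
        _ ≤ f y - f (x m) :=
            grad_inner_le_aux hKconv hfconv (hxK m) hy (hdiff _ (hxK m))
    have hγ0 : 0 ≤ γ := (hγ m).1
    nlinarith [mul_le_mul_of_nonneg_left h1 hγ0]
  -- induction from k = 1
  induction k with
  | zero => omega
  | succ k ih =>
    have hc : (2:ℝ) ≤ (k:ℝ) + 2 := by linarith [Nat.cast_nonneg (α := ℝ) k]
    have hcpos : (0:ℝ) < (k:ℝ) + 2 := by linarith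
    have hrk := hrec k
    rcases Nat.eq_zero_or_pos k with h0 | hpos
    · subst h0
      push_cast at hrk ⊢
      norm_num at hrk ⊢
      linarith
    · have ihk := ih hpos
      have hγle : 1 - 2 / ((k:ℝ) + 2) ≥ 0 := by
        have := (hγ k).2; linarith
      have hbound : (1 - 2 / ((k : ℝ) + 2)) * (f (x k) - f y) ≤
          (1 - 2 / ((k : ℝ) + 2)) * (2 * Cf / ((k:ℝ) + 2)) := by
        apply mul_le_mul_of_nonneg_left _ hγle
        linarith
      have key : (1 - 2 / ((k : ℝ) + 2)) * (2 * Cf / ((k:ℝ) + 2)) +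
          (2 / ((k : ℝ) + 2)) ^ 2 * Cf / 2 ≤ 2 * Cf / ((k:ℝ) + 1 + 2) := by
        set c : ℝ := (k:ℝ) + 2 with hcdef
        have heq : (1 - 2/c) * (2*Cf/c) + (2/c)^2 * Cf/2 = 2*Cf*(c-1)/c^2 := by
          field_simp
          ring
        have hc1 : (0:ℝ) < c + 1 := by linarith
        rw [heq, show (k:ℝ) + 1 + 2 = c + 1 by rw [hcdef]; ring,
          div_le_div_iff₀ (by positivity) hc1]
        nlinarith
      push_cast
      linarith
end

section
/- Let M₁, M₂ be matroids on the same ground set U and suppose U contains k₁ disjoint sets independent in M₁ and k₂ disjoint sets independent in M₂, each of size r'. Let k = min(k₁,k₂). Then M₁ and M₂ have a common independent set of size at least 2r' − |U|/k. -/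
open Classical

noncomputable section

variable {α : Type*} [DecidableEq α]

namespace FinMatroid

set_option linter.unusedSectionVars false

variable (M : FinMatroid α)

lemma exchange'' ⦃A B : Finset α⦄ (hA : M.Indep A)
    (hB : M.Indep B) (h : A.card < B.card) :
    ∃ b ∈ B \ A, M.Indep (insert b A) := by
  have e : (fun a b => propDecidable (a = b) : DecidableEq α) = ‹DecidableEq α› :=
    Subsingleton.elim _ _
  have := M.exchange hA hB h
  convert this using 3 <;> rw [e]

lemma card_le_rank {B T : Finset α} (hB : M.Indep B) (hBT : B ⊆ T) :
    B.card ≤ M.rank T := by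
  apply Finset.le_sup
  simp [Finset.mem_filter, Finset.mem_powerset, hB, hBT]

lemma exists_rank_set (T : Finset α) :
    ∃ B ⊆ T, M.Indep B ∧ B.card = M.rank T := by
  have hne : (T.powerset.filter fun A => M.Indep A).Nonempty :=
    ⟨∅, by simp [M.empty_indep]⟩
  obtain ⟨B, hB, hcard⟩ := Finset.exists_mem_eq_sup _ hne Finset.card
  simp only [Finset.mem_filter, Finset.mem_powerset] at hB
  exact ⟨B, hB.1, hB.2, hcard.symm⟩

lemma rank_mono {S T : Finset α} (h : S ⊆ T) : M.rank S ≤ M.rank T := by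
  obtain ⟨B, hBS, hBi, hBc⟩ := M.exists_rank_set S
  rw [← hBc]
  exact M.card_le_rank hBi (hBS.trans h)

lemma rank_le_card (T : Finset α) : M.rank T ≤ T.card := by
  obtain ⟨B, hBS, _, hBc⟩ := M.exists_rank_set T
  rw [← hBc]; exact Finset.card_le_card hBS

lemma augment : ∀ (d : ℕ) (C B : Finset α), M.Indep C → M.Indep B →
    B.card - C.card = d → C.card ≤ B.card →
    ∃ C', C ⊆ C' ∧ C' ⊆ C ∪ B ∧ M.Indep C' ∧ C'.card = B.card := by
  intro d
  induction d with
  | zero =>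
    intro C B hC _ hd hle
    exact ⟨C, subset_rfl, Finset.subset_union_left, hC,
      le_antisymm hle (Nat.sub_eq_zero_iff_le.mp hd)⟩
  | succ d ih =>
    intro C B hC hB hd _
    have hlt : C.card < B.card := by omega
    obtain ⟨b, hb, hbi⟩ := M.exchange'' hC hB hlt
    simp only [Finset.mem_sdiff] at hb
    have hcard : (insert b C).card = C.card + 1 := Finset.card_insert_of_notMem hb.2
    obtain ⟨C', h1, h2, h3, h4⟩ := ih (insert b C) B hbi hB (by omega) (by omega)
    refine ⟨C', (Finset.subset_insert _ _).trans h1, h2.trans ?_, h3, h4⟩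
    intro x hx
    rcases Finset.mem_union.mp hx with hx | hx
    · rcases Finset.mem_insert.mp hx with rfl | hx
      · exact Finset.mem_union_right _ hb.1
      · exact Finset.mem_union_left _ hx
    · exact Finset.mem_union_right _ hx

lemma rank_submodular (A B : Finset α) :
    M.rank (A ∪ B) + M.rank (A ∩ B) ≤ M.rank A + M.rank B := by
  obtain ⟨I, hIs, hIi, hIc⟩ := M.exists_rank_set (A ∩ B)
  obtain ⟨J, hJs, hJi, hJc⟩ := M.exists_rank_set (A ∪ B)
  have hle : I.card ≤ J.card := by
    rw [hIc, hJc]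
    exact M.rank_mono (Finset.inter_subset_union)
  obtain ⟨K, hIK, hKs, hKi, hKc⟩ := M.augment _ I J hIi hJi rfl hle
  have hKsub : K ⊆ A ∪ B :=
    hKs.trans (Finset.union_subset (hIs.trans Finset.inter_subset_union) hJs)
  have h1 : (K ∩ A).card ≤ M.rank A :=
    M.card_le_rank (M.subset_indep hKi Finset.inter_subset_left) Finset.inter_subset_right
  have h2 : (K ∩ B).card ≤ M.rank B :=
    M.card_le_rank (M.subset_indep hKi Finset.inter_subset_left) Finset.inter_subset_right
  have e1 : (K ∩ A) ∪ (K ∩ B) = K ∩ (A ∪ B) := by ext x; simp; tauto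
  have e2 : (K ∩ A) ∩ (K ∩ B) = K ∩ (A ∩ B) := by ext x; simp; tauto
  have hsum := Finset.card_union_add_card_inter (K ∩ A) (K ∩ B)
  rw [e1, e2] at hsum
  have hKAB : K ∩ (A ∪ B) = K := Finset.inter_eq_left.mpr hKsub
  have hIKi : I ⊆ K ∩ (A ∩ B) := fun x hx => Finset.mem_inter.mpr ⟨hIK hx, hIs hx⟩
  have h3 := Finset.card_le_card hIKi
  rw [hKAB, hKc] at hsum
  omega


/-- Contraction of a matroid by a single non-loop element. -/
def contract (M : FinMatroid α) (e : α) (he : M.Indep {e}) : FinMatroid α where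
  Indep A := e ∉ A ∧ M.Indep (insert e A)
  empty_indep := ⟨Finset.notMem_empty e, by simpa using he⟩
  subset_indep := by
    intro A B hA hBA
    exact ⟨fun h => hA.1 (hBA h), M.subset_indep hA.2 (Finset.insert_subset_insert _ hBA)⟩
  exchange := by
    have einst : (fun a b => propDecidable (a = b) : DecidableEq α) = ‹DecidableEq α› :=
      Subsingleton.elim _ _
    subst einst
    intro A B hA hB hlt
    have h1 : (insert e A).card < (insert e B).card := by
      rw [Finset.card_insert_of_notMem hA.1, Finset.card_insert_of_notMem hB.1]; omega
    obtain ⟨b, hb, hbi⟩ := M.exchange'' hA.2 hB.2 h1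
    simp only [Finset.mem_sdiff, Finset.mem_insert] at hb
    obtain ⟨hb1 | hb1, hb2⟩ := hb
    · exact absurd (Or.inl hb1) hb2
    · push_neg at hb2
      refine ⟨b, Finset.mem_sdiff.mpr ⟨hb1, hb2.2⟩, ?_, ?_⟩
      · simp only [Finset.mem_insert]
        push_neg
        exact ⟨fun h => hb2.1 h.symm, hA.1⟩
      · have h2 : insert e (insert b A) = insert b (insert e A) := Finset.insert_comm _ _ _
        rw [h2]; exact hbi

lemma contract_indep_iff (M : FinMatroid α) (e : α) (he : M.Indep {e}) (A : Finset α) :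
    (M.contract e he).Indep A ↔ e ∉ A ∧ M.Indep (insert e A) := by
  have einst : (fun a b => propDecidable (a = b) : DecidableEq α) = ‹DecidableEq α› :=
    Subsingleton.elim _ _
  simp only [contract, einst]

lemma rank_insert_loop (M : FinMatroid α) {e : α} (he : ¬ M.Indep {e}) (A : Finset α) :
    M.rank (insert e A) = M.rank A := by
  refine le_antisymm ?_ (M.rank_mono (Finset.subset_insert _ _))
  obtain ⟨B, hBs, hBi, hBc⟩ := M.exists_rank_set (insert e A)
  have heB : e ∉ B := fun h => he (M.subset_indep hBi (Finset.singleton_subset_iff.mpr h))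
  have hBA : B ⊆ A := fun x hx => by
    rcases Finset.mem_insert.mp (hBs hx) with rfl | h
    · exact absurd hx heB
    · exact h
  rw [← hBc]
  exact M.card_le_rank hBi hBA

lemma contract_rank (M : FinMatroid α) {e : α} (he : M.Indep {e}) {A : Finset α}
    (heA : e ∉ A) : (M.contract e he).rank A + 1 = M.rank (insert e A) := by
  apply le_antisymm
  · obtain ⟨B, hBs, hBi, hBc⟩ := (M.contract e he).exists_rank_set A
    rw [contract_indep_iff] at hBi
    have heB : e ∉ B := hBi.1
    have h1 : (insert e B).card = B.card + 1 := Finset.card_insert_of_notMem heB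
    rw [← hBc, ← h1]
    exact M.card_le_rank hBi.2 (Finset.insert_subset_insert _ hBs)
  · obtain ⟨B, hBs, hBi, hBc⟩ := M.exists_rank_set (insert e A)
    have h1 : 1 ≤ B.card := by
      rw [hBc]
      have := M.card_le_rank he (Finset.singleton_subset_iff.mpr (Finset.mem_insert_self e A))
      simpa using this
    obtain ⟨C, hC1, hC2, hC3, hC4⟩ := M.augment _ {e} B he hBi rfl (by simpa using h1)
    have heC : e ∈ C := hC1 (Finset.mem_singleton_self e)
    have hCe : insert e (C.erase e) = C := Finset.insert_erase heC
    have hDi : (M.contract e he).Indep (C.erase e) := by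
      rw [contract_indep_iff]
      exact ⟨Finset.notMem_erase _ _, by rw [hCe]; exact hC3⟩
    have hDs : C.erase e ⊆ A := by
      intro x hx
      have hx1 := Finset.mem_of_mem_erase hx
      have hx2 := Finset.ne_of_mem_erase hx
      rcases Finset.mem_insert.mp (hC2 hx1) with h | h
      · exact absurd h hx2
      · rcases Finset.mem_insert.mp (hBs h) with rfl | h
        · exact absurd rfl hx2
        · exact h
    have := (M.contract e he).card_le_rank hDi hDs
    rw [Finset.card_erase_of_mem heC, hC4] at this
    omega

set_option maxHeartbeats 1000000 in
lemma matroid_intersection : ∀ (N : ℕ) (E : Finset α) (M1 M2 : FinMatroid α) (n : ℕ),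
    E.card ≤ N →
    (∀ A ⊆ E, n ≤ M1.rank A + M2.rank (E \ A)) →
    ∃ T ⊆ E, M1.Indep T ∧ M2.Indep T ∧ n ≤ T.card := by
  intro N
  induction N with
  | zero =>
    intro E M1 M2 n hcard hyp
    have hE : E = ∅ := Finset.card_eq_zero.mp (Nat.le_zero.mp hcard)
    refine ⟨∅, Finset.empty_subset _, M1.empty_indep, M2.empty_indep, ?_⟩
    have := hyp ∅ (Finset.empty_subset _)
    have h1 := M1.rank_le_card (∅ : Finset α)
    have h2 := M2.rank_le_card (E \ ∅)
    simp [hE] at this h1 h2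
    omega
  | succ N ih =>
    intro E M1 M2 n hcard hyp
    rcases Nat.eq_zero_or_pos n with rfl | hn
    · exact ⟨∅, Finset.empty_subset _, M1.empty_indep, M2.empty_indep, Nat.zero_le _⟩
    rcases Finset.eq_empty_or_nonempty E with rfl | ⟨e, heE⟩
    · have := hyp ∅ (Finset.empty_subset _)
      have h1 := M1.rank_le_card (∅ : Finset α)
      have h2 := M2.rank_le_card ((∅ : Finset α) \ ∅)
      simp at this h1 h2
      omega
    set E' := E.erase e with hE'
    have hE'card : E'.card ≤ N := by
      have h := Finset.card_erase_of_mem heE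
      rw [← hE'] at h
      omega
    have heE' : e ∉ E' := Finset.notMem_erase _ _
    have hE'sub : E' ⊆ E := Finset.erase_subset _ _
    by_cases hdel : ∀ A ⊆ E', n ≤ M1.rank A + M2.rank (E' \ A)
    · obtain ⟨T, hTs, h1, h2, h3⟩ := ih E' M1 M2 n hE'card hdel
      exact ⟨T, hTs.trans hE'sub, h1, h2, h3⟩
    push_neg at hdel
    obtain ⟨A₁, hA₁s, hA₁⟩ := hdel
    have heA₁ : e ∉ A₁ := fun h => heE' (hA₁s h)
    -- e is not a loop of M1
    have he1 : M1.Indep {e} := by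
      by_contra hl
      apply absurd hA₁ (not_lt.mpr ?_)
      have h0 := hyp (insert e A₁) (Finset.insert_subset heE (hA₁s.trans hE'sub))
      have eq1 : E \ insert e A₁ = E' \ A₁ := by
        rw [hE', Finset.sdiff_insert, Finset.erase_sdiff_comm]
      rw [eq1, M1.rank_insert_loop hl] at h0
      exact h0
    -- e is not a loop of M2
    have he2 : M2.Indep {e} := by
      by_contra hl
      apply absurd hA₁ (not_lt.mpr ?_)
      have h0 := hyp A₁ (hA₁s.trans hE'sub)
      have eq1 : E \ A₁ = insert e (E' \ A₁) := by
        rw [hE', Finset.erase_sdiff_comm,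
          Finset.insert_erase (Finset.mem_sdiff.mpr ⟨heE, heA₁⟩)]
      rw [eq1, M2.rank_insert_loop hl] at h0
      exact h0
    -- the contraction hypothesis holds
    have hcon : ∀ A ⊆ E',
        n - 1 ≤ (M1.contract e he1).rank A + (M2.contract e he2).rank (E' \ A) := by
      intro A hAs
      have heA : e ∉ A := fun h => heE' (hAs h)
      have heA' : e ∉ E' \ A := fun h => heE' (Finset.mem_sdiff.mp h).1
      have r1f := M1.contract_rank he1 heA
      have r2f := M2.contract_rank he2 heA'
      by_contra hcc
      push_neg at hcc
      -- submodularity for M1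
      have s1 := M1.rank_submodular (insert e A) A₁
      have u1 : insert e A ∪ A₁ = insert e (A ∪ A₁) := Finset.insert_union e A A₁
      have i1 : insert e A ∩ A₁ = A ∩ A₁ := Finset.insert_inter_of_notMem heA₁
      rw [u1, i1] at s1
      -- submodularity for M2
      have s2 := M2.rank_submodular (insert e (E' \ A)) (E' \ A₁)
      have u2 : insert e (E' \ A) ∪ (E' \ A₁) = insert e (E' \ (A ∩ A₁)) := by
        rw [Finset.insert_union, Finset.sdiff_inter_distrib_right]
      have heA₁' : e ∉ E' \ A₁ := fun h => heE' (Finset.mem_sdiff.mp h).1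
      have i2 : insert e (E' \ A) ∩ (E' \ A₁) = E' \ (A ∪ A₁) := by
        rw [Finset.insert_inter_of_notMem heA₁', Finset.sdiff_union_distrib]
      rw [u2, i2] at s2
      -- two applications of the main hypothesis
      have hy1 := hyp (insert e (A ∪ A₁))
        (Finset.insert_subset heE ((Finset.union_subset hAs hA₁s).trans hE'sub))
      have ey1 : E \ insert e (A ∪ A₁) = E' \ (A ∪ A₁) := by
        rw [hE', Finset.sdiff_insert, Finset.erase_sdiff_comm]
      rw [ey1] at hy1
      have hy2 := hyp (A ∩ A₁) ((Finset.inter_subset_left).trans (hAs.trans hE'sub))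
      have heAA₁ : e ∉ A ∩ A₁ := fun h => heA (Finset.mem_inter.mp h).1
      have ey2 : E \ (A ∩ A₁) = insert e (E' \ (A ∩ A₁)) := by
        rw [hE', Finset.erase_sdiff_comm,
          Finset.insert_erase (Finset.mem_sdiff.mpr ⟨heE, heAA₁⟩)]
      rw [ey2] at hy2
      omega
    obtain ⟨T', hT's, hT'1, hT'2, hT'c⟩ :=
      ih E' (M1.contract e he1) (M2.contract e he2) (n - 1) hE'card hcon
    rw [contract_indep_iff] at hT'1 hT'2
    refine ⟨insert e T', Finset.insert_subset heE (hT's.trans hE'sub), hT'1.2, hT'2.2, ?_⟩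
    rw [Finset.card_insert_of_notMem hT'1.1]
    omega

lemma pack_bound [Fintype α] (M : FinMatroid α) (k₀ r' : ℕ) (I : Fin k₀ → Finset α)
    (hind : ∀ i, M.Indep (I i)) (hcard : ∀ i, (I i).card = r')
    (hdisj : ∀ i j, i ≠ j → Disjoint (I i) (I j)) (k : ℕ) (hk : k ≤ k₀) (A : Finset α) :
    k * r' ≤ k * M.rank A + (Finset.univ \ A).card := by
  classical
  set f : ℕ → Finset α := fun i => if h : i < k₀ then I ⟨i, h⟩ else ∅ with hf
  have hdisj' : ∀ i ∈ Finset.range k, ∀ j ∈ Finset.range k, i ≠ j → Disjoint (f i) (f j) := by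
    intro i hi j hj hij
    have hi' : i < k₀ := lt_of_lt_of_le (Finset.mem_range.mp hi) hk
    have hj' : j < k₀ := lt_of_lt_of_le (Finset.mem_range.mp hj) hk
    simp only [hf, dif_pos hi', dif_pos hj']
    exact hdisj _ _ (fun h => hij (congrArg Fin.val h))
  set S : Finset α := (Finset.range k).biUnion f with hS
  have hScard : S.card = k * r' := by
    rw [hS, Finset.card_biUnion hdisj']
    rw [Finset.sum_congr rfl (fun i hi => ?_), Finset.sum_const, Finset.card_range, smul_eq_mul]
    have hi' : i < k₀ := lt_of_lt_of_le (Finset.mem_range.mp hi) hk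
    simp only [hf, dif_pos hi', hcard]
  have hSA : S ∩ A = (Finset.range k).biUnion (fun i => f i ∩ A) := by
    rw [hS, Finset.biUnion_inter]
  have hdisj'' : ∀ i ∈ Finset.range k, ∀ j ∈ Finset.range k, i ≠ j →
      Disjoint (f i ∩ A) (f j ∩ A) := fun i hi j hj hij =>
    ((hdisj' i hi j hj hij).mono Finset.inter_subset_left Finset.inter_subset_left)
  have hSAcard : (S ∩ A).card ≤ k * M.rank A := by
    rw [hSA, Finset.card_biUnion hdisj'']
    calc ∑ i ∈ Finset.range k, (f i ∩ A).card
        ≤ ∑ _i ∈ Finset.range k, M.rank A := by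
          apply Finset.sum_le_sum
          intro i hi
          have hi' : i < k₀ := lt_of_lt_of_le (Finset.mem_range.mp hi) hk
          apply M.card_le_rank _ Finset.inter_subset_right
          exact M.subset_indep (by simpa only [hf, dif_pos hi'] using hind ⟨i, hi'⟩)
            Finset.inter_subset_left
      _ = k * M.rank A := by rw [Finset.sum_const, Finset.card_range, smul_eq_mul]
  have hsplit : (S ∩ A).card + (S \ A).card = S.card := Finset.card_inter_add_card_sdiff S A
  have hSdiff : (S \ A).card ≤ (Finset.univ \ A).card :=
    Finset.card_le_card (fun x hx => Finset.mem_sdiff.mpr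
      ⟨Finset.mem_univ x, (Finset.mem_sdiff.mp hx).2⟩)
  omega

end FinMatroid

/-- If the ground set `U` contains `k₁` disjoint `M₁`-independent sets and `k₂` disjoint
`M₂`-independent sets, each of size `r'`, then `M₁` and `M₂` have a common independent set of
size at least `2r' − |U| / min(k₁, k₂)`. -/
theorem common_independent_from_packings [Fintype α] (M₁ M₂ : FinMatroid α)
    (k₁ k₂ r' : ℕ) (hk₁ : 0 < k₁) (hk₂ : 0 < k₂)
    (I1 : Fin k₁ → Finset α) (I2 : Fin k₂ → Finset α)
    (h1ind : ∀ i, M₁.Indep (I1 i)) (h1card : ∀ i, (I1 i).card = r')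
    (h1disj : ∀ i j, i ≠ j → Disjoint (I1 i) (I1 j))
    (h2ind : ∀ i, M₂.Indep (I2 i)) (h2card : ∀ i, (I2 i).card = r')
    (h2disj : ∀ i j, i ≠ j → Disjoint (I2 i) (I2 j)) :
    ∃ T : Finset α, M₁.Indep T ∧ M₂.Indep T ∧
      2 * (r' : ℝ) - (Fintype.card α : ℝ) / ((min k₁ k₂ : ℕ) : ℝ) ≤ (T.card : ℝ) := by
  classical
  set k : ℕ := min k₁ k₂ with hk
  have hkpos : 0 < k := lt_min hk₁ hk₂
  -- a minimizing partition
  obtain ⟨A₀, hA₀mem, hA₀min⟩ := Finset.exists_min_image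
    (Finset.univ : Finset α).powerset
    (fun A => M₁.rank A + M₂.rank (Finset.univ \ A))
    ⟨∅, Finset.empty_mem_powerset _⟩
  set n : ℕ := M₁.rank A₀ + M₂.rank (Finset.univ \ A₀) with hn
  obtain ⟨T, _, hT1, hT2, hTc⟩ := FinMatroid.matroid_intersection
    (Finset.univ : Finset α).card Finset.univ M₁ M₂ n le_rfl
    (fun A hA => hA₀min A (Finset.mem_powerset.mpr hA))
  refine ⟨T, hT1, hT2, ?_⟩
  -- the natural-number bound
  have b1 := M₁.pack_bound k₁ r' I1 h1ind h1card h1disj k (min_le_left _ _) A₀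
  have b2 := M₂.pack_bound k₂ r' I2 h2ind h2card h2disj k (min_le_right _ _)
    (Finset.univ \ A₀)
  have hsub : Finset.univ \ (Finset.univ \ A₀) ⊆ A₀ := by
    intro x hx
    have := (Finset.mem_sdiff.mp hx).2
    by_contra hxA
    exact this (Finset.mem_sdiff.mpr ⟨Finset.mem_univ x, hxA⟩)
  have b2' : k * r' ≤ k * M₂.rank (Finset.univ \ A₀) + A₀.card :=
    b2.trans (by have := Finset.card_le_card hsub; omega)
  have hcardsplit : A₀.card + (Finset.univ \ A₀).card = Fintype.card α := by
    have h1 : (Finset.univ \ A₀).card = Finset.univ.card - A₀.card :=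
      Finset.card_sdiff_of_subset (Finset.subset_univ A₀)
    have h2 : A₀.card ≤ Finset.univ.card := Finset.card_le_card (Finset.subset_univ A₀)
    rw [h1, Finset.card_univ] at *
    omega
  have key : 2 * k * r' ≤ k * n + Fintype.card α := by rw [hn]; ring_nf; omega
  have keyT : 2 * k * r' ≤ k * T.card + Fintype.card α := by
    have : k * n ≤ k * T.card := Nat.mul_le_mul_left _ hTc
    omega
  -- pass to the reals
  have hkR : (0 : ℝ) < (k : ℝ) := by exact_mod_cast hkpos
  have keyR : 2 * (k : ℝ) * (r' : ℝ) ≤ (k : ℝ) * (T.card : ℝ) + (Fintype.card α : ℝ) := by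
    exact_mod_cast keyT
  have hrw : 2 * (r' : ℝ) - (Fintype.card α : ℝ) / (k : ℝ)
      = (2 * (r' : ℝ) * (k : ℝ) - (Fintype.card α : ℝ)) / (k : ℝ) := by
    field_simp
  rw [hk] at hrw ⊢
  rw [hrw, div_le_iff₀ (by rw [← hk]; exact hkR)]
  rw [← hk]
  nlinarith [keyR]
end
end

section
/- Let M₁, M₂ be matroids on V, S ∈ I₁ ∩ I₂, and let S' be obtained from S by augmenting along a shortest s–t path in the exchange graph G(S) (so S' ∈ I₁ ∩ I₂ with |S'| = |S| + 1). Then for every a ∈ V: if d_{G(S)}(s,a) ≥ d_{G(S)}(s,t), then d_{G(S')}(s,a) ≥ d_{G(S)}(s,t). -/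
open Classical

noncomputable section

variable {α : Type*} [DecidableEq α]

/-- Elements at odd positions (1-indexed) of a list: `v₁, v₃, …` — these are the elements
added by an augmentation. -/
def oddElems (l : List α) : Finset α :=
  ((l.zipIdx.filter fun p => p.2 % 2 == 0).map Prod.fst).toFinset

/-- Elements at even positions (1-indexed) of a list: `v₂, v₄, …` — these are the elements
removed by an augmentation. -/
def evenElems (l : List α) : Finset α :=
  ((l.zipIdx.filter fun p => p.2 % 2 == 1).map Prod.fst).toFinset

-- ===================== auxiliary lemmas =====================

lemma getElem_congr_idx' {β : Type*} (L : List β) (i j : ℕ) (h : i = j) (hi : i < L.length) :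
    L[i] = L[j]'(h ▸ hi) := by subst h; rfl

-- ---- distance lemmas ----

lemma egDist_le_chain {M₁ M₂ : FinMatroid α} {S : Finset α} {u v : EGV α} {L : List (EGV α)}
    (h : List.Chain' (egAdj M₁ M₂ S) (u :: (L ++ [v]))) :
    egDist M₁ M₂ S u v ≤ (L.length : ℕ∞) + 1 :=
  sInf_le ⟨L, h, rfl⟩

lemma exists_chain_of_egDist_le {M₁ M₂ : FinMatroid α} {S : Finset α} {u v : EGV α} {n : ℕ}
    (h : egDist M₁ M₂ S u v ≤ (n : ℕ∞)) :
    ∃ L : List (EGV α), List.Chain' (egAdj M₁ M₂ S) (u :: (L ++ [v])) ∧ L.length + 1 ≤ n := by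
  by_contra hc
  push_neg at hc
  have : ((n : ℕ∞) + 1) ≤ egDist M₁ M₂ S u v := by
    apply le_sInf
    rintro m ⟨L, hL, rfl⟩
    have := hc L hL
    have : n + 1 ≤ L.length + 1 := by omega
    calc (n : ℕ∞) + 1 = ((n+1 : ℕ) : ℕ∞) := by push_cast; ring
    _ ≤ ((L.length + 1 : ℕ) : ℕ∞) := by exact_mod_cast this
    _ = (L.length : ℕ∞) + 1 := by push_cast; ring
  have h2 : ((n : ℕ∞) + 1) ≤ (n : ℕ∞) := le_trans this h
  have : (n : ℕ∞) < (n : ℕ∞) + 1 :=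
    ENat.lt_add_one_iff (by exact_mod_cast ENat.coe_ne_top n) |>.mpr le_rfl
  exact absurd (lt_of_lt_of_le this h2) (lt_irrefl _)

lemma egDist_step {M₁ M₂ : FinMatroid α} {S : Finset α} {u v : EGV α} {n : ℕ}
    (h : egDist M₁ M₂ S EGV.src u ≤ (n : ℕ∞)) (harc : egAdj M₁ M₂ S u v) :
    egDist M₁ M₂ S EGV.src v ≤ ((n + 1 : ℕ) : ℕ∞) := by
  obtain ⟨L, hL, hlen⟩ := exists_chain_of_egDist_le h
  have hchain : List.Chain' (egAdj M₁ M₂ S) (EGV.src :: ((L ++ [u]) ++ [v])) := by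
    have : (EGV.src :: ((L ++ [u]) ++ [v])) = (EGV.src :: (L ++ [u])) ++ [v] := by simp
    rw [this, show List.Chain' (egAdj M₁ M₂ S) = List.IsChain (egAdj M₁ M₂ S) from rfl,
      List.isChain_append]
    refine ⟨hL, List.isChain_singleton v, ?_⟩
    intro x hx y hy
    simp only [List.head?_cons, Option.mem_def, Option.some.injEq] at hy
    have : (EGV.src :: (L ++ [u])).getLast? = some u := by
      rw [show EGV.src :: (L ++ [u]) = (EGV.src :: L) ++ [u] by simp, List.getLast?_concat]
    rw [this] at hx
    simp only [Option.mem_def, Option.some.injEq] at hx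
    subst hx; subst hy; exact harc
  have := egDist_le_chain hchain
  calc egDist M₁ M₂ S EGV.src v ≤ ((L ++ [u]).length : ℕ∞) + 1 := this
  _ = (((L.length + 1) + 1 : ℕ) : ℕ∞) := by push_cast; simp
  _ ≤ ((n + 1 : ℕ) : ℕ∞) := by exact_mod_cast by omega

lemma egDist_arc_src {M₁ M₂ : FinMatroid α} {S : Finset α} {v : EGV α}
    (harc : egAdj M₁ M₂ S EGV.src v) :
    egDist M₁ M₂ S EGV.src v ≤ ((1 : ℕ) : ℕ∞) := by
  have : List.Chain' (egAdj M₁ M₂ S) (EGV.src :: (([] : List (EGV α)) ++ [v])) := by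
    exact List.isChain_pair.mpr harc
  simpa using egDist_le_chain this

-- ---- matroid lemmas ----

lemma finsetInsert_irrel (d₁ d₂ : DecidableEq α) (b : α) (A : Finset α) :
    @insert α (Finset α) (@Finset.instInsert α d₁) b A
      = @insert α (Finset α) (@Finset.instInsert α d₂) b A := by
  have : d₁ = d₂ := by funext a b; exact Subsingleton.elim _ _
  rw [this]

lemma FinMatroid.exchange' (M : FinMatroid α) {A B : Finset α} (hA : M.Indep A)
    (hB : M.Indep B) (h : A.card < B.card) :
    ∃ b, b ∈ B ∧ b ∉ A ∧ M.Indep (insert b A) := by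
  obtain ⟨b, hb, hbi⟩ := M.exchange hA hB h
  simp only [Finset.mem_sdiff] at hb
  refine ⟨b, hb.1, hb.2, ?_⟩
  rwa [finsetInsert_irrel] at hbi

lemma FinMatroid.grow_aux (M : FinMatroid α) (n : ℕ) :
    ∀ A B : Finset α, M.Indep A → M.Indep B → B.card ≤ A.card + n →
    ∃ C, A ⊆ C ∧ C ⊆ A ∪ B ∧ M.Indep C ∧ B.card ≤ C.card := by
  induction n with
  | zero => intro A B hA _ hc; exact ⟨A, le_refl _, Finset.subset_union_left, hA, by omega⟩
  | succ n ih =>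
    intro A B hA hB hc
    by_cases h : B.card ≤ A.card
    · exact ⟨A, le_refl _, Finset.subset_union_left, hA, h⟩
    · obtain ⟨b, hb1, hb2, hbi⟩ := M.exchange' hA hB (by omega)
      have hci : (insert b A).card = A.card + 1 := Finset.card_insert_of_notMem hb2
      obtain ⟨C, h1, h2, h3, h4⟩ := ih (insert b A) B hbi hB (by rw [hci]; omega)
      refine ⟨C, le_trans ?_ h1, ?_, h3, h4⟩
      · exact Finset.subset_insert _ _
      · intro x hx
        rcases Finset.mem_union.mp (h2 hx) with h | h
        · rcases Finset.mem_insert.mp h with rfl | h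
          · exact Finset.mem_union_right _ hb1
          · exact Finset.mem_union_left _ h
        · exact Finset.mem_union_right _ h

lemma FinMatroid.grow (M : FinMatroid α) {A B : Finset α} (hA : M.Indep A) (hB : M.Indep B) :
    ∃ C, A ⊆ C ∧ C ⊆ A ∪ B ∧ M.Indep C ∧ B.card ≤ C.card :=
  M.grow_aux (B.card) A B hA hB (by omega)

lemma FinMatroid.two_exchanges (M : FinMatroid α) {S T : Finset α} {y : α}
    (hS : M.Indep S) (hT : M.Indep T) (hy : y ∈ S) (hyT : y ∉ T)
    (hcard : S.card + 1 ≤ T.card) :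
    ∃ z₁ z₂, z₁ ≠ z₂ ∧ (z₁ ∈ T ∧ z₁ ∉ S ∧ M.Indep (insert z₁ (S.erase y))) ∧
      (z₂ ∈ T ∧ z₂ ∉ S ∧ M.Indep (insert z₂ (S.erase y))) := by
  have hRS : S.erase y ⊆ S := Finset.erase_subset _ _
  have hRind : M.Indep (S.erase y) := M.subset_indep hS hRS
  obtain ⟨C, h1, h2, h3, h4⟩ := M.grow hRind hT
  have hRcard : (S.erase y).card = S.card - 1 := Finset.card_erase_of_mem hy
  have hScard : 1 ≤ S.card := Finset.card_pos.mpr ⟨y, hy⟩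
  have hcard2 : 2 ≤ (C \ (S.erase y)).card := by
    have := Finset.card_sdiff_of_subset h1
    omega
  obtain ⟨z₁, hz₁, z₂, hz₂, hne⟩ := Finset.one_lt_card.mp (by omega : 1 < (C \ (S.erase y)).card)
  have key : ∀ z ∈ C \ (S.erase y), z ∈ T ∧ z ∉ S ∧ M.Indep (insert z (S.erase y)) := by
    intro z hz
    rw [Finset.mem_sdiff] at hz
    have hzC := hz.1
    have hzT : z ∈ T := by
      rcases Finset.mem_union.mp (h2 hzC) with h | h
      · exact absurd h hz.2
      · exact h
    have hzy : z ≠ y := by rintro rfl; exact hyT hzT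
    have hzS : z ∉ S := by
      intro hzS
      exact hz.2 (Finset.mem_erase.mpr ⟨hzy, hzS⟩)
    refine ⟨hzT, hzS, M.subset_indep h3 ?_⟩
    intro w hw
    rcases Finset.mem_insert.mp hw with rfl | hw
    · exact hzC
    · exact h1 hw
  exact ⟨z₁, z₂, hne, key z₁ hz₁, key z₂ hz₂⟩

lemma FinMatroid.insert_or_swap (M : FinMatroid α) {S T : Finset α} {y : α}
    (hS : M.Indep S) (hT : M.Indep T) (hyT : y ∈ T) (hyS : y ∉ S) :
    M.Indep (insert y S) ∨ ∃ z ∈ S, z ∉ T ∧ M.Indep (insert y (S.erase z)) := by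
  have hA₀T : insert y (T ∩ S) ⊆ T := by
    intro x hx
    rcases Finset.mem_insert.mp hx with rfl | hx
    · exact hyT
    · exact (Finset.mem_inter.mp hx).1
  have hA₀ind : M.Indep (insert y (T ∩ S)) := M.subset_indep hT hA₀T
  obtain ⟨C, h1, h2, h3, h4⟩ := M.grow hA₀ind hS
  have hCsub : C ⊆ insert y S := by
    intro x hx
    rcases Finset.mem_union.mp (h2 hx) with h | h
    · rcases Finset.mem_insert.mp h with rfl | h
      · exact Finset.mem_insert_self _ _
      · exact Finset.mem_insert_of_mem (Finset.mem_inter.mp h).2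
    · exact Finset.mem_insert_of_mem h
  by_cases hSC : S ⊆ C
  · left
    have : insert y S ⊆ C := by
      intro x hx
      rcases Finset.mem_insert.mp hx with rfl | hx
      · exact h1 (Finset.mem_insert_self _ _)
      · exact hSC hx
    exact M.subset_indep h3 this
  · right
    obtain ⟨z, hzS, hzC⟩ := Finset.not_subset.mp hSC
    refine ⟨z, hzS, ?_, ?_⟩
    · intro hzT
      exact hzC (h1 (Finset.mem_insert_of_mem (Finset.mem_inter.mpr ⟨hzT, hzS⟩)))
    · have hzy : z ≠ y := by rintro rfl; exact hyS hzS
      have hCsub2 : C ⊆ insert y (S.erase z) := by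
        intro x hx
        rcases Finset.mem_insert.mp (hCsub hx) with rfl | hxS
        · exact Finset.mem_insert_self _ _
        · refine Finset.mem_insert_of_mem (Finset.mem_erase.mpr ⟨?_, hxS⟩)
          rintro rfl; exact hzC hx
      have hcardeq : (insert y (S.erase z)).card = S.card := by
        rw [Finset.card_insert_of_notMem (by
          intro h; exact hyS (Finset.mem_of_mem_erase h)),
          Finset.card_erase_of_mem hzS]
        have : 1 ≤ S.card := Finset.card_pos.mpr ⟨z, hzS⟩
        omega
      have : C = insert y (S.erase z) := Finset.eq_of_subset_of_card_le hCsub2 (by omega)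
      rw [← this]; exact h3

-- ---- parity list lemmas ----

def parList (r : ℕ) (l : List α) : List α :=
  ((l.zipIdx.filter fun p => p.2 % 2 == r).map Prod.fst)

lemma oddElems_eq (l : List α) : oddElems l = (parList 0 l).toFinset := rfl
lemma evenElems_eq (l : List α) : evenElems l = (parList 1 l).toFinset := rfl

lemma parList_shift (r : ℕ) (l : List α) : ∀ (k : ℕ),
    ((l.zipIdx (k+2)).filter (fun p => p.2 % 2 == r)).map Prod.fst
      = ((l.zipIdx k).filter (fun p => p.2 % 2 == r)).map Prod.fst := by
  induction l with
  | nil => intro k; simp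
  | cons x t ih =>
    intro k
    rw [List.zipIdx_cons, List.zipIdx_cons, List.filter_cons, List.filter_cons]
    have hmod : (k + 2) % 2 = k % 2 := Nat.add_mod_right k 2
    simp only [hmod]
    have ih' := ih (k+1)
    rw [show k + 2 + 1 = (k+1) + 2 by omega]
    by_cases hk : (k % 2 == r) = true
    · simp only [hk, if_true, List.map_cons, ih']
    · simp only [hk, Bool.false_eq_true, if_false, ih']

lemma parList_zero_cons_cons (a b : α) (t : List α) :
    parList 0 (a :: b :: t) = a :: parList 0 t := by
  unfold parList
  have h2 := parList_shift 0 t 0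
  rw [show (a :: b :: t).zipIdx = (a,0) :: (b,1) :: (t.zipIdx 2) from by
    simp [List.zipIdx_cons]]
  rw [List.filter_cons, List.filter_cons]
  norm_num
  exact h2

lemma parList_one_cons_cons (a b : α) (t : List α) :
    parList 1 (a :: b :: t) = b :: parList 1 t := by
  unfold parList
  have h2 := parList_shift 1 t 0
  rw [show (a :: b :: t).zipIdx = (a,0) :: (b,1) :: (t.zipIdx 2) from by
    simp [List.zipIdx_cons]]
  rw [List.filter_cons, List.filter_cons]
  norm_num
  exact h2

lemma parList_singleton_zero (a : α) : parList 0 [a] = [a] := rfl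

lemma parList_singleton_one (a : α) : parList 1 [a] = [] := rfl

lemma parList_sublist (r : ℕ) (l : List α) : (parList r l).Sublist l := by
  have := (List.filter_sublist (p := fun p : α × ℕ => p.2 % 2 == r) (l := l.zipIdx)).map Prod.fst
  simpa [parList, List.zipIdx_map_fst] using this

lemma parList_length_odd : ∀ (n : ℕ) (l : List α), l.length ≤ n → l.length % 2 = 1 →
    (parList 0 l).length = (parList 1 l).length + 1 := by
  intro n
  induction n with
  | zero => intro l h1 h2; simp at h1; subst h1; simp at h2
  | succ n ih =>
    intro l h1 h2
    match l with
    | [] => simp at h2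
    | [a] => rw [parList_singleton_zero, parList_singleton_one]; rfl
    | a :: b :: t =>
      rw [parList_zero_cons_cons, parList_one_cons_cons]
      simp only [List.length_cons]
      have := ih t (by simp at h1 ⊢; omega) (by simp at h2 ⊢; omega)
      omega

lemma mem_parList (r : ℕ) (l : List α) (y : α) : ∀ (k : ℕ),
    (y ∈ ((l.zipIdx k).filter (fun p => p.2 % 2 == r)).map Prod.fst
      ↔ ∃ p, ∃ _ : p < l.length, (k + p) % 2 = r ∧ l[p] = y) := by
  induction l with
  | nil => intro k; simp
  | cons x t ih =>
    intro k
    rw [List.zipIdx_cons, List.filter_cons]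
    constructor
    · intro h
      by_cases hk : (k % 2 == r) = true
      · simp only [hk, if_true, List.map_cons, List.mem_cons] at h
        rcases h with rfl | h
        · exact ⟨0, by simp, by simpa using beq_iff_eq.mp hk, rfl⟩
        · obtain ⟨p, hp, hpar, hy⟩ := (ih (k+1)).mp h
          exact ⟨p+1, by simpa using hp, by omega, by simpa using hy⟩
      · simp only [hk, Bool.false_eq_true, if_false] at h
        obtain ⟨p, hp, hpar, hy⟩ := (ih (k+1)).mp h
        exact ⟨p+1, by simpa using hp, by omega, by simpa using hy⟩
    · rintro ⟨p, hp, hpar, hy⟩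
      match p with
      | 0 =>
        have hk : (k % 2 == r) = true := by simpa using hpar
        simp only [hk, if_true, List.map_cons, List.mem_cons]
        left; exact hy.symm ▸ rfl
      | p+1 =>
        have hmem : y ∈ ((t.zipIdx (k+1)).filter (fun q => q.2 % 2 == r)).map Prod.fst := by
          refine (ih (k+1)).mpr ⟨p, by simpa using hp, by omega, by simpa using hy⟩
        by_cases hk : (k % 2 == r) = true
        · simp only [hk, if_true, List.map_cons, List.mem_cons]; right; exact hmem
        · simp only [hk, Bool.false_eq_true, if_false]; exact hmem

lemma mem_oddElems_iff (l : List α) (y : α) :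
    y ∈ oddElems l ↔ ∃ p, ∃ _ : p < l.length, p % 2 = 0 ∧ l[p] = y := by
  rw [oddElems_eq, List.mem_toFinset]
  have := mem_parList 0 l y 0
  simpa [parList] using this

lemma mem_evenElems_iff (l : List α) (y : α) :
    y ∈ evenElems l ↔ ∃ p, ∃ _ : p < l.length, p % 2 = 1 ∧ l[p] = y := by
  rw [evenElems_eq, List.mem_toFinset]
  have := mem_parList 1 l y 0
  simpa [parList] using this



-- ---- path structure lemmas ----

section PathStruct

variable (M₁ M₂ : FinMatroid α) (S : Finset α) (l : List α)
  (hchain : List.Chain' (egAdj M₁ M₂ S) (EGV.src :: (l.map EGV.el ++ [EGV.snk])))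

lemma BL_get_mid (p : ℕ) (h : p < l.length)
    (h2 : p + 1 < (EGV.src :: (l.map EGV.el ++ [EGV.snk])).length) :
    (EGV.src :: (l.map EGV.el ++ [EGV.snk]))[p+1] = EGV.el l[p] := by
  rw [List.getElem_cons_succ, List.getElem_append_left (by simpa using h), List.getElem_map]

include hchain

lemma H0 (h : 0 < l.length) : egAdj M₁ M₂ S EGV.src (EGV.el l[0]) := by
  have hg := List.isChain_iff_getElem.mp hchain 0 (by simp <;> omega)
  rwa [BL_get_mid (h := h) (h2 := by simp <;> omega)] at hg

lemma Hget (p : ℕ) (h : p + 1 < l.length) :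
    egAdj M₁ M₂ S (EGV.el l[p]) (EGV.el l[p+1]) := by
  have hg := List.isChain_iff_getElem.mp hchain (p+1) (by simp <;> omega)
  rwa [BL_get_mid (p := p) (h := by omega) (h2 := by simp <;> omega),
    BL_get_mid (p := p+1) (h := h) (h2 := by simp <;> omega)] at hg

lemma Hlast (m : ℕ) (hm : l.length = m + 1) :
    egAdj M₁ M₂ S (EGV.el (l[m]'(by omega))) EGV.snk := by
  have hg := List.isChain_iff_getElem.mp hchain (m+1) (by simp <;> omega)
  rw [BL_get_mid (p := m) (h := by omega) (h2 := by simp <;> omega)] at hg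
  have e2 : (EGV.src :: (l.map EGV.el ++ [EGV.snk]))[m+1+1]'(by simp <;> omega)
      = (EGV.snk : EGV α) := by
    rw [List.getElem_cons_succ, List.getElem_append_right (by simp <;> omega)]
    simp
  rwa [e2] at hg

lemma Halt : ∀ p, ∀ _ : p < l.length, (l[p] ∈ S ↔ p % 2 = 1) := by
  intro p
  induction p with
  | zero =>
    intro h
    have := H0 M₁ M₂ S l hchain h
    simp only [Nat.zero_mod]
    exact ⟨fun hm => absurd hm this.1, by omega⟩
  | succ p ih =>
    intro h
    have harc := Hget M₁ M₂ S l hchain p h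
    have ihp := ih (by omega)
    rcases harc with ⟨h1, h2, _⟩ | ⟨h1, h2, _⟩
    · have : p % 2 = 1 := ihp.mp h1
      exact ⟨fun hm => absurd hm h2, by omega⟩
    · have : ¬ p % 2 = 1 := fun hh => h1 (ihp.mpr hh)
      exact ⟨fun _ => by omega, fun _ => h2⟩

lemma Hlodd (h : 0 < l.length) : l.length % 2 = 1 := by
  obtain ⟨m, hm⟩ : ∃ m, l.length = m + 1 := ⟨l.length - 1, by omega⟩
  have hlast := Hlast M₁ M₂ S l hchain m hm
  have halt := Halt M₁ M₂ S l hchain m (by omega)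
  have hnot : l[m]'(by omega) ∉ S := hlast.1
  have : ¬ m % 2 = 1 := fun hh => hnot (halt.mpr hh)
  omega

lemma F1 : ∀ p, ∀ _ : p < l.length,
    egDist M₁ M₂ S EGV.src (EGV.el l[p]) ≤ ((p + 1 : ℕ) : ℕ∞) := by
  intro p
  induction p with
  | zero => intro hp; exact egDist_arc_src (H0 M₁ M₂ S l hchain hp)
  | succ p ih =>
    intro hp
    exact egDist_step (ih (by omega)) (Hget M₁ M₂ S l hchain p hp)

variable (hshort : egDist M₁ M₂ S EGV.src EGV.snk = (l.length : ℕ∞) + 1)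

include hshort

lemma Hnodup : l.Nodup := by
  by_contra hnd
  rw [List.nodup_iff_injective_get] at hnd
  obtain ⟨i', j', hgeteq, hne⟩ := Function.not_injective_iff.mp hnd
  obtain ⟨i, j, hij, heq⟩ : ∃ i j : ℕ, i < j ∧ ∃ (hi : i < l.length) (hj : j < l.length),
      l[i] = l[j] := by
    rcases lt_trichotomy (i' : ℕ) (j' : ℕ) with h | h | h
    · exact ⟨i', j', h, i'.2, j'.2, by simpa [List.get_eq_getElem] using hgeteq⟩
    · exact absurd (Fin.ext h) hne
    · exact ⟨j', i', h, j'.2, i'.2, by simpa [List.get_eq_getElem] using hgeteq.symm⟩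
  obtain ⟨hi, hj, heq⟩ := heq
  have hAlen : ((l.take i).map (EGV.el : α → EGV α)).length = i := by simp; omega
  have hBlen : ((l.drop j).map (EGV.el : α → EGV α)).length = l.length - j := by simp
  have hWlen : ((l.take i).map (EGV.el : α → EGV α) ++ (l.drop j).map EGV.el).length
      = i + (l.length - j) := by simp; omega
  have hWlen' : ((l.take i).map (EGV.el : α → EGV α) ++ (l.drop j).map EGV.el
      ++ [EGV.snk]).length = i + (l.length - j) + 1 := by simp; omega
  have hXa : ∀ (q : ℕ) (hq : q < i)
      (h2 : q < ((l.take i).map (EGV.el : α → EGV α) ++ (l.drop j).map EGV.el ++ [EGV.snk]).length),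
      ((l.take i).map (EGV.el : α → EGV α) ++ (l.drop j).map EGV.el ++ [EGV.snk])[q]
        = EGV.el (l[q]'(by omega)) := by
    intro q hq h2
    rw [List.getElem_append_left (by rw [hWlen]; omega),
      List.getElem_append_left (by rw [hAlen]; omega),
      List.getElem_map, List.getElem_take]
  have hXb : ∀ (q : ℕ) (hq : q < l.length - j)
      (h2 : i + q < ((l.take i).map (EGV.el : α → EGV α) ++ (l.drop j).map EGV.el ++ [EGV.snk]).length),
      ((l.take i).map (EGV.el : α → EGV α) ++ (l.drop j).map EGV.el ++ [EGV.snk])[i + q]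
        = EGV.el (l[j + q]'(by omega)) := by
    intro q hq h2
    rw [List.getElem_append_left (by rw [hWlen]; omega),
      List.getElem_append_right (by rw [hAlen]; omega : ((l.take i).map (EGV.el : α → EGV α)).length ≤ i + q),
      List.getElem_map]
    have : (l.drop j)[(i + q) - ((l.take i).map (EGV.el : α → EGV α)).length]'(by
        simp only [List.length_drop]; rw [hAlen]; omega) = l[j + q]'(by omega) := by
      rw [List.getElem_drop]
      exact getElem_congr_idx' l _ _ (by rw [hAlen]; omega) _
    rw [this]
  have hXc : ∀ (h2 : i + (l.length - j)
        < ((l.take i).map (EGV.el : α → EGV α) ++ (l.drop j).map EGV.el ++ [EGV.snk]).length),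
      ((l.take i).map (EGV.el : α → EGV α) ++ (l.drop j).map EGV.el ++ [EGV.snk])[i + (l.length - j)]
        = (EGV.snk : EGV α) := by
    intro h2
    rw [List.getElem_append_right (by rw [hWlen] : _ ≤ i + (l.length - j))]
    simp
  have hchainW : List.Chain' (egAdj M₁ M₂ S) (EGV.src ::
      ((l.take i).map (EGV.el : α → EGV α) ++ (l.drop j).map EGV.el ++ [EGV.snk])) := by
    rw [show List.Chain' (egAdj M₁ M₂ S) = List.IsChain (egAdj M₁ M₂ S) from rfl,
      List.isChain_iff_getElem]
    intro q hq
    have hq' : q < i + (l.length - j) + 1 := by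
      have h1 : (EGV.src :: ((l.take i).map (EGV.el : α → EGV α)
          ++ (l.drop j).map EGV.el ++ [EGV.snk])).length = i + (l.length - j) + 2 := by
        rw [List.length_cons, hWlen']
      rw [h1] at hq
      omega
    match q, hq with
    | 0, hq =>
      rw [List.getElem_cons_zero, List.getElem_cons_succ]
      by_cases hi0 : i = 0
      · rw [getElem_congr_idx' _ 0 (i+0) (by omega) (by rw [hWlen']; omega),
          hXb 0 (by omega) (by rw [hWlen']; omega)]
        have h0 := H0 M₁ M₂ S l hchain (by omega)
        have e : l[j+0]'(by omega) = l[0]'(by omega) := by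
          rw [getElem_congr_idx' l (j+0) j (by omega) (by omega), ← heq]
          exact getElem_congr_idx' l i 0 hi0 hi
        rw [e]
        exact h0
      · rw [hXa 0 (by omega) (by rw [hWlen']; omega)]
        exact H0 M₁ M₂ S l hchain (by omega)
    | Nat.succ q, hq =>
      rw [List.getElem_cons_succ, List.getElem_cons_succ]
      by_cases h1 : q + 1 < i
      · rw [hXa q (by omega) (by rw [hWlen']; omega), hXa (q+1) h1 (by rw [hWlen']; omega)]
        exact Hget M₁ M₂ S l hchain q (by omega)
      · by_cases h2 : q + 1 = i
        · rw [hXa q (by omega) (by rw [hWlen']; omega)]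
          rw [getElem_congr_idx' _ (q+1) (i+0) (by omega) (by rw [hWlen']; omega),
            hXb 0 (by omega) (by rw [hWlen']; omega)]
          have harc := Hget M₁ M₂ S l hchain q (by omega)
          have e : l[j+0]'(by omega) = l[q+1]'(by omega) := by
            rw [getElem_congr_idx' l (j+0) j (by omega) (by omega), ← heq]
            exact getElem_congr_idx' l i (q+1) (by omega) hi
          rw [e]
          exact harc
        · obtain ⟨r, rfl⟩ : ∃ r, q = i + r := ⟨q - i, by omega⟩
          by_cases h3 : r + 1 < l.length - j
          · rw [hXb r (by omega) (by rw [hWlen']; omega)]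
            rw [getElem_congr_idx' _ (i+r+1) (i+(r+1)) (by omega) (by rw [hWlen']; omega),
              hXb (r+1) h3 (by rw [hWlen']; omega)]
            have harc := Hget M₁ M₂ S l hchain (j+r) (by omega)
            have e : l[j+(r+1)]'(by omega) = l[j+r+1]'(by omega) :=
              getElem_congr_idx' l _ _ (by omega) (by omega)
            rw [e]
            exact harc
          · have h4 : r + 1 = l.length - j := by omega
            rw [hXb r (by omega) (by rw [hWlen']; omega)]
            rw [getElem_congr_idx' _ (i+r+1) (i+(l.length-j)) (by omega) (by rw [hWlen']; omega),
              hXc (by rw [hWlen']; omega)]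
            obtain ⟨m, hm⟩ : ∃ m, l.length = m + 1 := ⟨l.length - 1, by omega⟩
            have hlast := Hlast M₁ M₂ S l hchain m hm
            have e : l[j+r]'(by omega) = l[m]'(by omega) :=
              getElem_congr_idx' l _ _ (by omega) (by omega)
            rw [e]
            exact hlast
  have hle := egDist_le_chain (L := (l.take i).map (EGV.el : α → EGV α) ++ (l.drop j).map EGV.el)
    hchainW
  rw [hshort] at hle
  rw [show ((l.take i).map (EGV.el : α → EGV α) ++ (l.drop j).map EGV.el).length
    = i + (l.length - j) from hWlen] at hle
  have : ((l.length + 1 : ℕ) : ℕ∞) ≤ ((i + (l.length - j) + 1 : ℕ) : ℕ∞) := by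
    push_cast
    exact_mod_cast hle
  have := Nat.cast_le.mp this
  omega

end PathStruct


/-- Second part of the monotonicity lemma: if `S'` is obtained from `S` by augmenting along a
shortest `s`–`t` path in `G(S)`, then every `a` with `d_{G(S)}(s,a) ≥ d_{G(S)}(s,t)`
satisfies `d_{G(S')}(s,a) ≥ d_{G(S)}(s,t)`. The first part of the monotonicity lemma is
assumed as hypothesis `hmono`. -/
theorem monotonicity_second_part (M₁ M₂ : FinMatroid α) (S S' : Finset α) (l : List α)
    (hS₁ : M₁.Indep S) (hS₂ : M₂.Indep S)
    (hchain : List.Chain' (egAdj M₁ M₂ S) (EGV.src :: (l.map EGV.el ++ [EGV.snk])))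
    (hshort : egDist M₁ M₂ S EGV.src EGV.snk = ((l.length : ℕ) : ℕ∞) + 1)
    (hS' : S' = (S \ evenElems l) ∪ oddElems l)
    (hmono : ∀ a : α,
      egDist M₁ M₂ S EGV.src (EGV.el a) < egDist M₁ M₂ S EGV.src EGV.snk →
      egDist M₁ M₂ S EGV.src (EGV.el a) ≤ egDist M₁ M₂ S' EGV.src (EGV.el a)) :
    ∀ a : α,
      egDist M₁ M₂ S EGV.src EGV.snk ≤ egDist M₁ M₂ S EGV.src (EGV.el a) →
      egDist M₁ M₂ S EGV.src EGV.snk ≤ egDist M₁ M₂ S' EGV.src (EGV.el a) := by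
  have halt := Halt M₁ M₂ S l hchain
  have hnodup := Hnodup M₁ M₂ S l hchain hshort
  have f1 := F1 M₁ M₂ S l hchain
  have hS'mem : ∀ y : α, y ∈ S' ↔ (y ∈ S ∧ y ∉ evenElems l) ∨ y ∈ oddElems l := by
    intro y
    rw [hS']
    simp [Finset.mem_union, Finset.mem_sdiff]
  have hE_sub : ∀ y ∈ evenElems l, y ∈ S := by
    intro y hy
    obtain ⟨p, hp, hpar, he⟩ := (mem_evenElems_iff l y).mp hy
    rw [← he]
    exact (halt p hp).mpr hpar
  have hO_not : ∀ y ∈ oddElems l, y ∉ S := by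
    intro y hy hyS
    obtain ⟨p, hp, hpar, he⟩ := (mem_oddElems_iff l y).mp hy
    rw [← he] at hyS
    have := (halt p hp).mp hyS
    omega
  have hcard : 0 < l.length → S'.card = S.card + 1 := by
    intro hl0
    have hlodd := Hlodd M₁ M₂ S l hchain hl0
    have hOnd : (parList 0 l).Nodup := List.Nodup.sublist (parList_sublist 0 l) hnodup
    have hEnd : (parList 1 l).Nodup := List.Nodup.sublist (parList_sublist 1 l) hnodup
    have hOcard : (oddElems l).card = (parList 0 l).length := by
      rw [oddElems_eq]; exact List.toFinset_card_of_nodup hOnd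
    have hEcard : (evenElems l).card = (parList 1 l).length := by
      rw [evenElems_eq]; exact List.toFinset_card_of_nodup hEnd
    have hlen := parList_length_odd l.length l le_rfl hlodd
    have hdisj : Disjoint (S \ evenElems l) (oddElems l) := by
      rw [Finset.disjoint_left]
      intro y hy hyO
      exact hO_not y hyO (Finset.mem_sdiff.mp hy).1
    have hEsub : evenElems l ⊆ S := fun y hy => hE_sub y hy
    rw [hS', Finset.card_union_of_disjoint hdisj, Finset.card_sdiff_of_subset hEsub]
    have := Finset.card_le_card hEsub
    omega
  have hfar_mem : ∀ (y : α) (p : ℕ), ∀ _ : p < l.length, l[p] = y →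
      egDist M₁ M₂ S EGV.src (EGV.el y) ≤ ((l.length : ℕ) : ℕ∞) := by
    intro y p hp he
    have := f1 p hp
    rw [he] at this
    exact le_trans this (by exact_mod_cast (show p + 1 ≤ l.length by omega))
  -- NF lemmas: no arc of G(S') points from a "near" vertex to a "far" vertex
  have NFsrc : ∀ b : α, 0 < l.length → b ∉ S' → M₁.Indep (insert b S') →
      egDist M₁ M₂ S EGV.src (EGV.el b) ≤ ((l.length : ℕ) : ℕ∞) := by
    intro b hl0 hb hind
    by_contra hfar
    have hbE : b ∉ evenElems l := by
      intro hmem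
      obtain ⟨p, hp, _, he⟩ := (mem_evenElems_iff l b).mp hmem
      exact hfar (hfar_mem b p hp he)
    have hbS : b ∉ S := fun hbS => hb ((hS'mem b).mpr (Or.inl ⟨hbS, hbE⟩))
    rcases M₁.insert_or_swap hS₁ hind (Finset.mem_insert_self b S') hbS with
      hcase | ⟨z, hzS, hzT, hzi⟩
    · exact hfar (le_trans
        (egDist_arc_src (show egAdj M₁ M₂ S EGV.src (EGV.el b) from ⟨hbS, hcase⟩))
        (by exact_mod_cast hl0))
    · have hzS'n : z ∉ S' := fun h => hzT (Finset.mem_insert_of_mem h)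
      have hzE : z ∈ evenElems l := by
        by_contra hzE
        exact hzS'n ((hS'mem z).mpr (Or.inl ⟨hzS, hzE⟩))
      obtain ⟨p, hp, hpar, he⟩ := (mem_evenElems_iff l z).mp hzE
      have hlodd := Hlodd M₁ M₂ S l hchain hl0
      have hdz : egDist M₁ M₂ S EGV.src (EGV.el z) ≤ ((p + 1 : ℕ) : ℕ∞) := by
        have := f1 p hp; rwa [he] at this
      have harc : egAdj M₁ M₂ S (EGV.el z) (EGV.el b) := Or.inl ⟨hzS, hbS, hzi⟩
      have := egDist_step hdz harc
      exact hfar (le_trans this (by exact_mod_cast (show p + 1 + 1 ≤ l.length by omega)))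
  have NFel1 : ∀ (x b : α) (k : ℕ), k + 1 ≤ l.length →
      egDist M₁ M₂ S EGV.src (EGV.el x) ≤ (k : ℕ∞) →
      x ∈ S' → b ∉ S' → M₁.Indep (insert b (S'.erase x)) →
      egDist M₁ M₂ S EGV.src (EGV.el b) ≤ ((l.length : ℕ) : ℕ∞) := by
    intro x b k hk hx hxS' hbS' hind
    by_contra hfar
    have hl0 : 0 < l.length := by omega
    have hbE : b ∉ evenElems l := by
      intro hmem
      obtain ⟨p, hp, _, he⟩ := (mem_evenElems_iff l b).mp hmem
      exact hfar (hfar_mem b p hp he)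
    have hbS : b ∉ S := fun hbS => hbS' ((hS'mem b).mpr (Or.inl ⟨hbS, hbE⟩))
    rcases M₁.insert_or_swap hS₁ hind (Finset.mem_insert_self b _) hbS with
      hcase | ⟨z, hzS, hzT, hzi⟩
    · exact hfar (le_trans
        (egDist_arc_src (show egAdj M₁ M₂ S EGV.src (EGV.el b) from ⟨hbS, hcase⟩))
        (by exact_mod_cast hl0))
    · by_cases hzx : z = x
      · subst hzx
        have harc : egAdj M₁ M₂ S (EGV.el z) (EGV.el b) := Or.inl ⟨hzS, hbS, hzi⟩
        have := egDist_step hx harc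
        exact hfar (le_trans this (by exact_mod_cast hk))
      · have hzS'n : z ∉ S' := fun h =>
          hzT (Finset.mem_insert_of_mem (Finset.mem_erase.mpr ⟨hzx, h⟩))
        have hzE : z ∈ evenElems l := by
          by_contra hzE
          exact hzS'n ((hS'mem z).mpr (Or.inl ⟨hzS, hzE⟩))
        obtain ⟨p, hp, hpar, he⟩ := (mem_evenElems_iff l z).mp hzE
        have hlodd := Hlodd M₁ M₂ S l hchain hl0
        have hdz : egDist M₁ M₂ S EGV.src (EGV.el z) ≤ ((p + 1 : ℕ) : ℕ∞) := by
          have := f1 p hp; rwa [he] at this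
        have harc : egAdj M₁ M₂ S (EGV.el z) (EGV.el b) := Or.inl ⟨hzS, hbS, hzi⟩
        have := egDist_step hdz harc
        exact hfar (le_trans this (by exact_mod_cast (show p + 1 + 1 ≤ l.length by omega)))
  have NFel2 : ∀ (c b : α) (k : ℕ), k + 1 ≤ l.length →
      egDist M₁ M₂ S EGV.src (EGV.el c) ≤ (k : ℕ∞) →
      c ∉ S' → b ∈ S' → M₂.Indep (insert c (S'.erase b)) →
      egDist M₁ M₂ S EGV.src (EGV.el b) ≤ ((l.length : ℕ) : ℕ∞) := by
    intro c b k hk hc hcS' hbS' hind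
    by_contra hfar
    have hl0 : 0 < l.length := by omega
    have hbO : b ∉ oddElems l := by
      intro hmem
      obtain ⟨p, hp, _, he⟩ := (mem_oddElems_iff l b).mp hmem
      exact hfar (hfar_mem b p hp he)
    have hbS : b ∈ S := by
      rcases (hS'mem b).mp hbS' with ⟨h, _⟩ | h
      · exact h
      · exact absurd h hbO
    have hbc : b ≠ c := fun h => hcS' (h ▸ hbS')
    have hbT : b ∉ insert c (S'.erase b) := by
      intro h
      rcases Finset.mem_insert.mp h with h | h
      · exact hbc h
      · exact (Finset.notMem_erase b S') h
    have hTcard : S.card + 1 ≤ (insert c (S'.erase b)).card := by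
      have e1 : (insert c (S'.erase b)).card = (S'.erase b).card + 1 :=
        Finset.card_insert_of_notMem (fun h => hcS' (Finset.mem_of_mem_erase h))
      have e2 : (S'.erase b).card = S'.card - 1 := Finset.card_erase_of_mem hbS'
      have e3 := hcard hl0
      have e4 : 1 ≤ S'.card := Finset.card_pos.mpr ⟨b, hbS'⟩
      omega
    obtain ⟨z₁, z₂, hne, ⟨hz1T, hz1S, hz1i⟩, ⟨hz2T, hz2S, hz2i⟩⟩ :=
      M₂.two_exchanges hS₂ hind hbS hbT hTcard
    have key : ∀ z : α, z ∉ S → M₂.Indep (insert z (S.erase b)) →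
        egDist M₁ M₂ S EGV.src (EGV.el z) ≤ ((l.length - 1 : ℕ) : ℕ∞) → False := by
      intro z hzS hzi hdz
      have harc : egAdj M₁ M₂ S (EGV.el z) (EGV.el b) := Or.inr ⟨hzS, hbS, hzi⟩
      have := egDist_step hdz harc
      exact hfar (le_trans this
        (by exact_mod_cast (show (l.length - 1) + 1 ≤ l.length by omega)))
    have keyO : ∀ z : α, z ∈ insert c (S'.erase b) → z ∉ S →
        M₂.Indep (insert z (S.erase b)) →
        z = c ∨ ∃ _ : l.length - 1 < l.length, l[l.length - 1] = z := by
      intro z hzT hzS hzi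
      rcases Finset.mem_insert.mp hzT with h | h
      · exact Or.inl h
      · have hzS' : z ∈ S' := Finset.mem_of_mem_erase h
        have hzO : z ∈ oddElems l := by
          rcases (hS'mem z).mp hzS' with ⟨h1, _⟩ | h1
          · exact absurd h1 hzS
          · exact h1
        obtain ⟨p, hp, hpar, he⟩ := (mem_oddElems_iff l z).mp hzO
        by_cases hple : p + 1 ≤ l.length - 1
        · exact absurd (key z hzS hzi (by
            have := f1 p hp
            rw [he] at this
            exact le_trans this (by exact_mod_cast hple))) (fun h => h)
        · right
          refine ⟨by omega, ?_⟩
          rw [← he]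
          exact getElem_congr_idx' l (l.length - 1) p (by omega) (by omega)
    have hkc : k ≤ l.length - 1 := by omega
    rcases keyO z₁ hz1T hz1S hz1i with rfl | ⟨hm1, he1⟩
    · exact key z₁ hz1S hz1i (le_trans hc (by exact_mod_cast hkc))
    rcases keyO z₂ hz2T hz2S hz2i with rfl | ⟨hm2, he2⟩
    · exact key z₂ hz2S hz2i (le_trans hc (by exact_mod_cast hkc))
    exact hne (he1.symm.trans he2) |>.elim
  -- main claim: short distances in G(S') reflect to G(S)
  have main : ∀ n : ℕ, ∀ b : α, n ≤ l.length →
      egDist M₁ M₂ S' EGV.src (EGV.el b) ≤ (n : ℕ∞) →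
      egDist M₁ M₂ S EGV.src (EGV.el b) ≤ (n : ℕ∞) := by
    intro n
    induction n using Nat.strong_induction_on with
    | _ n ih =>
      intro b hn hd
      obtain ⟨L, hL, hlen⟩ := exists_chain_of_egDist_le hd
      have hl0 : 0 < l.length := by omega
      have finish : egDist M₁ M₂ S EGV.src (EGV.el b) ≤ ((l.length : ℕ) : ℕ∞) →
          egDist M₁ M₂ S EGV.src (EGV.el b) ≤ (n : ℕ∞) := by
        intro hnf
        have hlt : egDist M₁ M₂ S EGV.src (EGV.el b) < egDist M₁ M₂ S EGV.src EGV.snk := by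
          rw [hshort]
          refine lt_of_le_of_lt hnf ?_
          exact ENat.lt_add_one_iff (by exact_mod_cast ENat.coe_ne_top l.length) |>.mpr le_rfl
        exact le_trans (hmono b hlt) hd
      rcases List.eq_nil_or_concat L with rfl | ⟨L', w, rfl⟩
      · have harc : egAdj M₁ M₂ S' EGV.src (EGV.el b) := by
          have h := hL
          simp only [List.nil_append] at h
          exact List.isChain_pair.mp h
        exact finish (NFsrc b hl0 harc.1 harc.2)
      · rw [List.concat_eq_append] at hL hlen
        have hre : (EGV.src :: (L' ++ [w] ++ [EGV.el b]))
            = (EGV.src :: (L' ++ [w])) ++ [EGV.el b] := by simp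
        rw [hre, show List.Chain' (egAdj M₁ M₂ S') = List.IsChain (egAdj M₁ M₂ S') from rfl,
          List.isChain_append] at hL
        obtain ⟨hc1, _, hglue⟩ := hL
        have harc : egAdj M₁ M₂ S' w (EGV.el b) := by
          apply hglue w ?_ (EGV.el b) (by simp)
          rw [show (EGV.src :: (L' ++ [w])) = (EGV.src :: L') ++ [w] by simp,
            List.getLast?_concat]
          rfl
        simp only [List.length_append, List.length_singleton] at hlen
        cases w with
        | snk => exact absurd harc (fun h => h)
        | src => exact finish (NFsrc b hl0 harc.1 harc.2)
        | el c =>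
          have hdc : egDist M₁ M₂ S' EGV.src (EGV.el c) ≤ ((n - 1 : ℕ) : ℕ∞) := by
            have h := egDist_le_chain hc1
            refine le_trans h ?_
            have h2 : L'.length + 1 ≤ n - 1 := by omega
            calc (L'.length : ℕ∞) + 1 = ((L'.length + 1 : ℕ) : ℕ∞) := by push_cast; ring
            _ ≤ ((n - 1 : ℕ) : ℕ∞) := by exact_mod_cast h2
          have hSc := ih (n - 1) (by omega) c (by omega) hdc
          rcases harc with ⟨h1, h2, h3⟩ | ⟨h1, h2, h3⟩
          · exact finish (NFel1 c b (n - 1) (by omega) hSc h1 h2 h3)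
          · exact finish (NFel2 c b (n - 1) (by omega) hSc h1 h2 h3)
  -- conclude
  intro a hge
  by_contra hcon
  push_neg at hcon
  rw [hshort] at hcon hge
  have h1 : egDist M₁ M₂ S' EGV.src (EGV.el a) ≤ ((l.length : ℕ) : ℕ∞) :=
    (ENat.lt_add_one_iff (by exact_mod_cast ENat.coe_ne_top l.length)).mp hcon
  have h2 := main l.length a le_rfl h1
  have h3 := le_trans hge h2
  have h4 : ((l.length + 1 : ℕ) : ℕ∞) ≤ ((l.length : ℕ) : ℕ∞) := by
    refine le_trans ?_ h3
    push_cast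
    exact le_refl _
  have := Nat.cast_le.mp h4
  omega
end
end
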